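/- arXiv:1409.7228 — 7 statements merged into one kernel-verified Lean document; each statement's English description precedes it below -/
import Mathlib

section
/- For every matrix A in GL(2,p), the sum of χ(uA) over all u in GL(2,p) equals p; in particular, the sum of χ(u) over all u in GL(2,p) equals p. -/
open scoped Matrix

/-- The generating character `χ(A) = exp(2πi · t(A) / p)` on `M₂(𝔽_p)`, where `t(A)` is the
integer representative of the trace of `A`. -/
noncomputable def genChar (p : ℕ) (A : Matrix (Fin 2) (Fin 2) (ZMod p)) : ℂ :=
  Complex.exp (2 * Real.pi * Complex.I * ((Matrix.trace A).val : ℂ) / p)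

open Finset

section Aux

variable (p : ℕ) [Fact p.Prime]

lemma genChar_eq (A : Matrix (Fin 2) (Fin 2) (ZMod p)) :
    genChar p A = ZMod.stdAddChar (Matrix.trace A) := by
  rw [ZMod.stdAddChar_apply, ZMod.toCircle_apply]
  rfl

lemma stdAddChar_ne_zero : (ZMod.stdAddChar : AddChar (ZMod p) ℂ) ≠ 0 := by
  intro h
  have h1 : (ZMod.stdAddChar : AddChar (ZMod p) ℂ) 1 =
      (ZMod.stdAddChar : AddChar (ZMod p) ℂ) 0 := by
    rw [h]; simp
  have := ZMod.injective_stdAddChar h1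
  exact one_ne_zero this

lemma sum_stdAddChar : (∑ x : ZMod p, ZMod.stdAddChar x) = 0 :=
  AddChar.sum_eq_zero_iff_ne_zero.mpr (stdAddChar_ne_zero p)

lemma sum_stdAddChar_shift (a : ZMod p) :
    (∑ d : ZMod p, ZMod.stdAddChar (a + d)) = 0 := by
  rw [Fintype.sum_equiv (Equiv.addLeft a)
    (fun d => ZMod.stdAddChar (a + d)) (fun d => ZMod.stdAddChar d) (fun d => rfl)]
  exact sum_stdAddChar p

lemma sum_psi_add :
    (∑ a : ZMod p, ∑ d : ZMod p, ZMod.stdAddChar (a + d)) = 0 := by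
  simp [sum_stdAddChar_shift p]

/-- The number of factorizations `b*c = s` in `ZMod p`. -/
lemma count_bc (s : ZMod p) :
    (∑ b : ZMod p, ∑ c : ZMod p, (if b * c = s then (1 : ℂ) else 0)) =
      ((p : ℂ) - 1) + (if s = 0 then (p : ℂ) else 0) := by
  have hcard : (Finset.univ : Finset (ZMod p)).card = p := by
    simp [ZMod.card]
  rw [← Finset.sum_erase_add _ _ (Finset.mem_univ (0 : ZMod p))]
  have h1 : ∀ b ∈ (Finset.univ : Finset (ZMod p)).erase 0,
      (∑ c : ZMod p, (if b * c = s then (1 : ℂ) else 0)) = 1 := by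
    intro b hb
    have hb0 : b ≠ 0 := Finset.ne_of_mem_erase hb
    have heq : ∀ c : ZMod p, (b * c = s) ↔ (c = b⁻¹ * s) := by
      intro c
      constructor
      · intro h; rw [← h, ← mul_assoc, inv_mul_cancel₀ hb0, one_mul]
      · intro h; rw [h, ← mul_assoc, mul_inv_cancel₀ hb0, one_mul]
    simp_rw [heq]
    simp
  rw [Finset.sum_congr rfl h1]
  have h0 : (∑ c : ZMod p, (if (0 : ZMod p) * c = s then (1 : ℂ) else 0)) =
      if s = 0 then (p : ℂ) else 0 := by
    simp_rw [zero_mul]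
    by_cases hs : s = 0 <;> simp [hs, eq_comm, hcard]
  rw [h0, Finset.sum_const, Finset.card_erase_of_mem (Finset.mem_univ _), hcard]
  have hp2 : 2 ≤ p := (Fact.out : p.Prime).two_le
  have hcast : ((p - 1 : ℕ) : ℂ) = (p : ℂ) - 1 := by
    push_cast [Nat.cast_sub (by omega : 1 ≤ p)]
    ring
  rw [nsmul_eq_mul, hcast, mul_one]

lemma sum_T :
    (∑ a : ZMod p, ∑ d : ZMod p,
      (if a * d = 0 then ZMod.stdAddChar (a + d) else (0 : ℂ))) = -1 := by
  rw [← Finset.sum_erase_add _ _ (Finset.mem_univ (0 : ZMod p))]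
  have h0 : (∑ d : ZMod p,
      (if (0 : ZMod p) * d = 0 then ZMod.stdAddChar (0 + d) else (0 : ℂ))) = 0 := by
    simpa using sum_stdAddChar p
  rw [h0, add_zero]
  have h1 : ∀ a ∈ (Finset.univ : Finset (ZMod p)).erase 0,
      (∑ d : ZMod p, (if a * d = 0 then ZMod.stdAddChar (a + d) else (0 : ℂ))) =
        ZMod.stdAddChar a := by
    intro a ha
    have ha0 : a ≠ 0 := Finset.ne_of_mem_erase ha
    have hiff : ∀ d : ZMod p, (a * d = 0) ↔ (d = 0) := by
      intro d
      rw [mul_eq_zero]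
      simp [ha0]
    simp_rw [hiff]
    rw [Finset.sum_ite_eq' Finset.univ (0 : ZMod p)
      (fun d => ZMod.stdAddChar (a + d))]
    simp
  rw [Finset.sum_congr rfl h1]
  have h2 := Finset.sum_erase_add Finset.univ (fun a : ZMod p => ZMod.stdAddChar a)
    (Finset.mem_univ (0 : ZMod p))
  rw [sum_stdAddChar p] at h2
  have h3 := eq_neg_of_add_eq_zero_left h2
  rw [h3]
  simp

/-- The singular-matrix character sum. -/
lemma piece2 :
    (∑ a : ZMod p, ∑ b : ZMod p, ∑ c : ZMod p, ∑ d : ZMod p,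
      (if b * c = a * d then ZMod.stdAddChar (a + d) else (0 : ℂ))) = -(p : ℂ) := by
  set ψ : AddChar (ZMod p) ℂ := ZMod.stdAddChar with hψ
  have reorder : ∀ a : ZMod p,
      (∑ b : ZMod p, ∑ c : ZMod p, ∑ d : ZMod p,
        (if b * c = a * d then ψ (a + d) else (0 : ℂ))) =
      ∑ d : ZMod p, ∑ b : ZMod p, ∑ c : ZMod p,
        (if b * c = a * d then ψ (a + d) else (0 : ℂ)) := by
    intro a
    rw [Finset.sum_congr rfl (fun b _ => Finset.sum_comm), Finset.sum_comm]
  simp_rw [reorder]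
  have inner : ∀ a d : ZMod p,
      (∑ b : ZMod p, ∑ c : ZMod p,
        (if b * c = a * d then ψ (a + d) else (0 : ℂ))) =
      ((p : ℂ) - 1) * ψ (a + d) +
        (p : ℂ) * (if a * d = 0 then ψ (a + d) else 0) := by
    intro a d
    have hval : ∀ b c : ZMod p, (if b * c = a * d then ψ (a + d) else (0 : ℂ)) =
        ψ (a + d) * (if b * c = a * d then (1 : ℂ) else 0) := by
      intro b c; split <;> simp
    simp_rw [hval, ← Finset.mul_sum]
    rw [count_bc p (a * d)]
    split <;> ring
  simp_rw [inner]
  rw [Finset.sum_congr rfl (fun a _ => Finset.sum_add_distrib), Finset.sum_add_distrib]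
  have t1 : (∑ a : ZMod p, ∑ d : ZMod p, ((p : ℂ) - 1) * ψ (a + d)) = 0 := by
    simp_rw [← Finset.mul_sum]
    rw [sum_psi_add p, mul_zero]
  have t2 : (∑ a : ZMod p, ∑ d : ZMod p,
      (p : ℂ) * (if a * d = 0 then ψ (a + d) else 0)) = -(p : ℂ) := by
    simp_rw [← Finset.mul_sum]
    rw [sum_T p]
    ring
  rw [t1, t2, zero_add]

/-- Equivalence between quadruples and 2×2 matrices. -/
def quadEquiv (K : Type*) : ((K × K) × (K × K)) ≃ Matrix (Fin 2) (Fin 2) K where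
  toFun x := !![x.1.1, x.1.2; x.2.1, x.2.2]
  invFun M := ((M 0 0, M 0 1), (M 1 0, M 1 1))
  left_inv := by rintro ⟨⟨a, b⟩, ⟨c, d⟩⟩; simp
  right_inv := fun M => (Matrix.eta_fin_two M).symm

/-- The main character sum over `GL(2,p)`. -/
lemma sum_genChar_units :
    (∑ u : (Matrix (Fin 2) (Fin 2) (ZMod p))ˣ,
        genChar p (u : Matrix (Fin 2) (Fin 2) (ZMod p))) = (p : ℂ) := by
  classical
  have step1 : (∑ u : (Matrix (Fin 2) (Fin 2) (ZMod p))ˣ,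
      genChar p (u : Matrix (Fin 2) (Fin 2) (ZMod p))) =
      ∑ M : Matrix (Fin 2) (Fin 2) (ZMod p), (if IsUnit M then genChar p M else 0) := by
    rw [← Finset.sum_filter]
    rw [Fintype.sum_equiv
      (show (Matrix (Fin 2) (Fin 2) (ZMod p))ˣ ≃
          {M : Matrix (Fin 2) (Fin 2) (ZMod p) // IsUnit M} from
        ⟨fun u => ⟨u, u.isUnit⟩, fun M => M.2.unit,
          fun u => Units.ext u.isUnit.unit_spec, fun M => Subtype.ext M.2.unit_spec⟩)
      (fun u => genChar p (u : Matrix (Fin 2) (Fin 2) (ZMod p)))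
      (fun M => genChar p M.1) (fun u => rfl)]
    exact (Finset.sum_subtype _ (by simp) _).symm
  rw [step1]
  rw [← Fintype.sum_equiv (quadEquiv (ZMod p)) _ _ (fun x => rfl)]
  have htr : ∀ x : (ZMod p × ZMod p) × (ZMod p × ZMod p),
      Matrix.trace (quadEquiv (ZMod p) x) = x.1.1 + x.2.2 := by
    rintro ⟨⟨a, b⟩, ⟨c, d⟩⟩
    simp [quadEquiv, Matrix.trace_fin_two]
  have hdet : ∀ x : (ZMod p × ZMod p) × (ZMod p × ZMod p),
      (quadEquiv (ZMod p) x).det = x.1.1 * x.2.2 - x.1.2 * x.2.1 := by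
    rintro ⟨⟨a, b⟩, ⟨c, d⟩⟩
    simp [quadEquiv, Matrix.det_fin_two]
  have hunit : ∀ x : (ZMod p × ZMod p) × (ZMod p × ZMod p),
      IsUnit (quadEquiv (ZMod p) x) ↔ x.1.1 * x.2.2 - x.1.2 * x.2.1 ≠ 0 := by
    intro x
    rw [Matrix.isUnit_iff_isUnit_det, hdet, isUnit_iff_ne_zero]
  have hval : ∀ x : (ZMod p × ZMod p) × (ZMod p × ZMod p),
      (if IsUnit (quadEquiv (ZMod p) x) then genChar p (quadEquiv (ZMod p) x) else 0) =
        ZMod.stdAddChar (x.1.1 + x.2.2) -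
          (if x.1.2 * x.2.1 = x.1.1 * x.2.2
            then ZMod.stdAddChar (x.1.1 + x.2.2) else 0) := by
    intro x
    by_cases h : x.1.2 * x.2.1 = x.1.1 * x.2.2
    · have hnu : ¬ IsUnit (quadEquiv (ZMod p) x) := by
        rw [hunit]; simp [h.symm, sub_eq_zero]
      simp [hnu, h]
    · have hu : IsUnit (quadEquiv (ZMod p) x) := by
        rw [hunit]
        intro hc
        exact h (by linear_combination -hc)
      rw [if_pos hu, if_neg h, sub_zero, genChar_eq, htr]
  rw [Finset.sum_congr rfl (fun x _ => hval x), Finset.sum_sub_distrib]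
  have piece1 : (∑ x : (ZMod p × ZMod p) × (ZMod p × ZMod p),
      ZMod.stdAddChar (x.1.1 + x.2.2)) = 0 := by
    rw [Fintype.sum_prod_type]
    have inner : ∀ y : ZMod p × ZMod p,
        (∑ z : ZMod p × ZMod p, ZMod.stdAddChar (y.1 + z.2)) = 0 := by
      intro y
      rw [Fintype.sum_prod_type]
      simp [sum_stdAddChar_shift p]
    simp [inner]
  have p2 : (∑ x : (ZMod p × ZMod p) × (ZMod p × ZMod p),
      (if x.1.2 * x.2.1 = x.1.1 * x.2.2
        then ZMod.stdAddChar (x.1.1 + x.2.2) else (0 : ℂ))) = -(p : ℂ) := by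
    rw [Fintype.sum_prod_type]
    simp_rw [Fintype.sum_prod_type]
    exact piece2 p
  rw [piece1, p2]
  ring

end Aux

/-- For every `A ∈ GL(2,p)`, `∑_{u ∈ GL(2,p)} χ(uA) = p`; in particular
`∑_{u ∈ GL(2,p)} χ(u) = p`. -/
theorem sum_genChar_mul_unit (p : ℕ) [Fact p.Prime]
    (A : Matrix (Fin 2) (Fin 2) (ZMod p)) (hA : IsUnit A) :
    (∑ u : (Matrix (Fin 2) (Fin 2) (ZMod p))ˣ,
        genChar p ((u : Matrix (Fin 2) (Fin 2) (ZMod p)) * A)) = (p : ℂ) ∧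
    (∑ u : (Matrix (Fin 2) (Fin 2) (ZMod p))ˣ,
        genChar p (u : Matrix (Fin 2) (Fin 2) (ZMod p))) = (p : ℂ) := by
  constructor
  · rw [Fintype.sum_equiv (Equiv.mulRight hA.unit)
      (fun u => genChar p ((u : Matrix (Fin 2) (Fin 2) (ZMod p)) * A))
      (fun u => genChar p (u : Matrix (Fin 2) (Fin 2) (ZMod p)))
      (fun u => by simp [hA.unit_spec])]
    exact sum_genChar_units p
  · exact sum_genChar_units p
end

section
/- For every nonzero non-invertible matrix B in M_2(F_p) (equivalently, every nonzero element of a minimal left ideal of M_2(F_p)), the sum of χ(uB) over all u in GL(2,p) equals p − p^2. -/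
namespace GenCharAux

open Finset

noncomputable def zeta (p : ℕ) : ℂ := Complex.exp (2 * Real.pi * Complex.I / p)

abbrev M2 (p : ℕ) := Matrix (Fin 2) (Fin 2) (ZMod p)

lemma genChar_eq (p : ℕ) (A : M2 p) :
    genChar p A = zeta p ^ (Matrix.trace A).val := by
  rw [genChar, zeta, ← Complex.exp_nat_mul]
  ring_nf

lemma zeta_pow_p (p : ℕ) [Fact p.Prime] : zeta p ^ p = 1 := by
  have hp : (p : ℂ) ≠ 0 := by exact_mod_cast (Fact.out : p.Prime).ne_zero
  rw [zeta, ← Complex.exp_nat_mul]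
  rw [show (p : ℂ) * (2 * Real.pi * Complex.I / p) = 2 * Real.pi * Complex.I by field_simp]
  exact Complex.exp_two_pi_mul_I

lemma zeta_ne_one (p : ℕ) [Fact p.Prime] : zeta p ≠ 1 := by
  intro h
  rw [zeta, Complex.exp_eq_one_iff] at h
  obtain ⟨n, hn⟩ := h
  have hp : (p : ℂ) ≠ 0 := by exact_mod_cast (Fact.out : p.Prime).ne_zero
  have h2 : (2 * Real.pi * Complex.I : ℂ) ≠ 0 := by
    simp [Real.pi_ne_zero, Complex.I_ne_zero]
  have key : ((n * p : ℤ) : ℂ) = ((1 : ℤ) : ℂ) := by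
    push_cast
    field_simp at hn
    exact (mul_left_cancel₀ h2 (by linear_combination (2 * Real.pi * Complex.I) * hn)).symm
  have h1 : (n * p : ℤ) = 1 := by exact_mod_cast key
  have hp2 : 2 ≤ p := (Fact.out : p.Prime).two_le
  have hd : (p : ℤ) ∣ 1 := ⟨n, by linarith [h1]⟩
  have := Int.le_of_dvd one_pos hd
  omega

lemma sum_zeta (p : ℕ) [Fact p.Prime] : ∑ a : ZMod p, zeta p ^ (a.val) = 0 := by
  have hne : NeZero p := ⟨(Fact.out : p.Prime).ne_zero⟩
  have : ∑ a : ZMod p, zeta p ^ (a.val) = ∑ k ∈ Finset.range p, zeta p ^ k := by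
    apply Finset.sum_nbij' (fun a : ZMod p => a.val) (fun k : ℕ => (k : ZMod p))
    · intro a _; exact Finset.mem_range.mpr (ZMod.val_lt a)
    · intro k _; exact Finset.mem_univ _
    · intro a _; exact ZMod.natCast_zmod_val a
    · intro k hk; exact ZMod.val_cast_of_lt (Finset.mem_range.mp hk)
    · intro a _; rfl
  rw [this, geom_sum_eq (zeta_ne_one p), zeta_pow_p]
  simp

lemma sum_units_eq (p : ℕ) [Fact p.Prime] (f : M2 p → ℂ) :
    ∑ w : (M2 p)ˣ, f ↑w = ∑ A : M2 p, if IsUnit A then f A else 0 := by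
  rw [← Finset.sum_filter]
  apply Finset.sum_bij (fun (w : (M2 p)ˣ) _ => (w : M2 p))
  · intro w _; simp [Units.isUnit]
  · intro w1 _ w2 _ h; exact Units.ext h
  · intro A hA
    obtain ⟨w, hw⟩ := (Finset.mem_filter.mp hA).2
    exact ⟨w, Finset.mem_univ _, hw⟩
  · intro w _; rfl

lemma sum_matrix {R : Type*} [Fintype R] [DecidableEq R] (F : Matrix (Fin 2) (Fin 2) R → ℂ) :
    ∑ A : Matrix (Fin 2) (Fin 2) R, F A
      = ∑ a : R, ∑ b : R, ∑ c : R, ∑ d : R, F !![a, b; c, d] := by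
  let e : ((R × R) × R × R) ≃ Matrix (Fin 2) (Fin 2) R :=
    { toFun := fun x => !![x.1.1, x.1.2; x.2.1, x.2.2]
      invFun := fun A => ((A 0 0, A 0 1), (A 1 0, A 1 1))
      left_inv := by rintro ⟨⟨a, b⟩, c, d⟩; simp
      right_inv := by intro A; simp [← Matrix.eta_fin_two] }
  rw [← Fintype.sum_equiv e (fun x => F (e x)) F (fun x => rfl)]
  rw [Fintype.sum_prod_type, Fintype.sum_prod_type]
  simp [e, Fintype.sum_prod_type]

lemma inner_count_ne (p : ℕ) [Fact p.Prime] (a b c : ZMod p) (ha : a ≠ 0) :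
    ∑ d : ZMod p, (if a * d - b * c ≠ 0 then (1 : ℂ) else 0) = (p : ℂ) - 1 := by
  haveI : NeZero p := ⟨(Fact.out : p.Prime).ne_zero⟩
  rw [Finset.sum_boole]
  have h1 : Finset.univ.filter (fun d : ZMod p => ¬(a * d - b * c ≠ 0)) = {a⁻¹ * (b * c)} := by
    ext d
    simp only [Finset.mem_filter, Finset.mem_univ, true_and, not_not, sub_eq_zero,
      Finset.mem_singleton]
    constructor
    · intro h; field_simp; linear_combination h
    · intro h; subst h; field_simp
  have h2 := Finset.card_filter_add_card_filter_not (s := (Finset.univ : Finset (ZMod p)))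
    (p := fun d => a * d - b * c ≠ 0)
  rw [h1] at h2
  simp only [Finset.card_singleton, Finset.card_univ, ZMod.card] at h2
  have hp2 : 2 ≤ p := (Fact.out : p.Prime).two_le
  have : (Finset.univ.filter (fun d : ZMod p => a * d - b * c ≠ 0)).card = p - 1 := by omega
  rw [this]
  push_cast [Nat.cast_sub (by omega : 1 ≤ p)]
  ring

lemma count_ne_zero' (p : ℕ) [Fact p.Prime] :
    ∑ b : ZMod p, (if b ≠ 0 then (1 : ℂ) else 0) = (p : ℂ) - 1 := by
  haveI : NeZero p := ⟨(Fact.out : p.Prime).ne_zero⟩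
  rw [Finset.sum_boole]
  have : Finset.univ.filter (fun b : ZMod p => b ≠ 0) = Finset.univ.erase 0 := by
    ext b; simp [Finset.mem_erase]
  rw [this, Finset.card_erase_of_mem (Finset.mem_univ _)]
  simp only [Finset.card_univ, ZMod.card]
  have hp2 : 2 ≤ p := (Fact.out : p.Prime).two_le
  push_cast [Nat.cast_sub (by omega : 1 ≤ p)]
  ring

lemma inner_count_zero (p : ℕ) [Fact p.Prime] :
    ∑ b : ZMod p, ∑ c : ZMod p, ∑ _d : ZMod p, (if 0 * _d - b * c ≠ 0 then (1 : ℂ) else 0)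
      = (p : ℂ) * ((p : ℂ) - 1) ^ 2 := by
  haveI : NeZero p := ⟨(Fact.out : p.Prime).ne_zero⟩
  have : ∀ b c : ZMod p, ∑ _d : ZMod p, (if 0 * _d - b * c ≠ 0 then (1 : ℂ) else 0)
      = (p : ℂ) * ((if b ≠ 0 then (1:ℂ) else 0) * (if c ≠ 0 then (1:ℂ) else 0)) := by
    intro b c
    simp only [zero_mul, zero_sub, ne_eq, neg_eq_zero]
    rw [Finset.sum_const, Finset.card_univ, ZMod.card, nsmul_eq_mul]
    congr 1
    by_cases hb : b = 0 <;> by_cases hc : c = 0 <;> simp [hb, hc, mul_eq_zero]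
  simp_rw [this, ← Finset.mul_sum, ← Finset.sum_mul, count_ne_zero' p]
  ring

lemma sum_corner (p : ℕ) [Fact p.Prime] :
    ∑ w : (M2 p)ˣ, zeta p ^ ((w : M2 p) 0 0).val = (p : ℂ) - (p : ℂ) ^ 2 := by
  haveI : NeZero p := ⟨(Fact.out : p.Prime).ne_zero⟩
  rw [sum_units_eq p (fun A => zeta p ^ (A 0 0).val),
    sum_matrix (R := ZMod p) (fun A => if IsUnit A then zeta p ^ (A 0 0).val else 0)]
  have hiso : ∀ A : M2 p, IsUnit A ↔ A.det ≠ 0 := fun A => by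
    rw [Matrix.isUnit_iff_isUnit_det, isUnit_iff_ne_zero]
  have hite : ∀ (P : Prop) [Decidable P] (x : ℂ),
      (if P then x else 0) = x * (if P then (1 : ℂ) else 0) := by
    intros P _ x; split <;> simp
  have step : ∀ a b c d : ZMod p,
      (if IsUnit (!![a,b;c,d] : M2 p) then zeta p ^ ((!![a,b;c,d] : M2 p) 0 0).val else 0)
        = zeta p ^ a.val * (if a * d - b * c ≠ 0 then (1 : ℂ) else 0) := by
    intro a b c d
    simp only [hiso, Matrix.det_fin_two_of]
    have hentry : (!![a,b;c,d] : M2 p) 0 0 = a := rfl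
    rw [hentry, hite]
  rw [Finset.sum_congr rfl (fun a _ => Finset.sum_congr rfl (fun b _ =>
    Finset.sum_congr rfl (fun c _ => Finset.sum_congr rfl (fun d _ => step a b c d))))]
  simp_rw [← Finset.mul_sum]
  rw [← Finset.sum_erase_add _ _ (Finset.mem_univ (0 : ZMod p))]
  have h0 : (zeta p ^ ((0 : ZMod p)).val) *
      (∑ b : ZMod p, ∑ c : ZMod p, ∑ d : ZMod p,
        (if 0 * d - b * c ≠ 0 then (1 : ℂ) else 0)) = (p : ℂ) * ((p : ℂ) - 1) ^ 2 := by
    rw [inner_count_zero p, ZMod.val_zero, pow_zero, one_mul]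
  have herase : ∑ a ∈ Finset.univ.erase (0 : ZMod p), (zeta p ^ a.val) *
      (∑ b : ZMod p, ∑ c : ZMod p, ∑ d : ZMod p,
        (if a * d - b * c ≠ 0 then (1 : ℂ) else 0))
      = -((p : ℂ) ^ 2 * ((p : ℂ) - 1)) := by
    have : ∀ a ∈ Finset.univ.erase (0 : ZMod p), (zeta p ^ a.val) *
        (∑ b : ZMod p, ∑ c : ZMod p, ∑ d : ZMod p,
          (if a * d - b * c ≠ 0 then (1 : ℂ) else 0))
        = (zeta p ^ a.val) * ((p : ℂ) ^ 2 * ((p : ℂ) - 1)) := by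
      intro a ha
      have ha0 : a ≠ 0 := (Finset.mem_erase.mp ha).1
      congr 1
      have : ∀ b c : ZMod p, ∑ d : ZMod p, (if a * d - b * c ≠ 0 then (1 : ℂ) else 0)
          = (p : ℂ) - 1 := fun b c => inner_count_ne p a b c ha0
      simp_rw [this, Finset.sum_const, Finset.card_univ, ZMod.card, nsmul_eq_mul]
      ring
    rw [Finset.sum_congr rfl this, ← Finset.sum_mul]
    have hsum : ∑ a ∈ Finset.univ.erase (0 : ZMod p), zeta p ^ a.val = -1 := by
      have := Finset.sum_erase_add Finset.univ (fun a : ZMod p => zeta p ^ a.val)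
        (Finset.mem_univ (0 : ZMod p))
      rw [sum_zeta p] at this
      simp only [ZMod.val_zero, pow_zero] at this
      linear_combination this
    rw [hsum]; ring
  rw [herase, h0]
  ring

lemma col_unit (p : ℕ) [Fact p.Prime] (u : Fin 2 → ZMod p) (hu : u ≠ 0) :
    ∃ P : M2 p, IsUnit P ∧ P 0 0 = u 0 ∧ P 1 0 = u 1 := by
  by_cases h : u 0 = 0
  · have h1 : u 1 ≠ 0 := by
      intro h1; apply hu; funext i; fin_cases i <;> assumption
    refine ⟨!![0, 1; u 1, 0], ?_, by simp [h], by simp⟩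
    rw [Matrix.isUnit_iff_isUnit_det, isUnit_iff_ne_zero, Matrix.det_fin_two_of]
    simpa using h1
  · refine ⟨!![u 0, 0; u 1, 1], ?_, by simp, by simp⟩
    rw [Matrix.isUnit_iff_isUnit_det, isUnit_iff_ne_zero, Matrix.det_fin_two_of]
    simpa using h

lemma row_unit (p : ℕ) [Fact p.Prime] (v : Fin 2 → ZMod p) (hv : v ≠ 0) :
    ∃ Q : M2 p, IsUnit Q ∧ Q 0 0 = v 0 ∧ Q 0 1 = v 1 := by
  by_cases h : v 0 = 0
  · have h1 : v 1 ≠ 0 := by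
      intro h1; apply hv; funext i; fin_cases i <;> assumption
    refine ⟨!![0, v 1; 1, 0], ?_, by simp [h], by simp⟩
    rw [Matrix.isUnit_iff_isUnit_det, isUnit_iff_ne_zero, Matrix.det_fin_two_of]
    simpa using h1
  · refine ⟨!![v 0, v 1; 0, 1], ?_, by simp, by simp⟩
    rw [Matrix.isUnit_iff_isUnit_det, isUnit_iff_ne_zero, Matrix.det_fin_two_of]
    simpa using h

lemma outer_decomp (p : ℕ) [Fact p.Prime] (B : M2 p) (hB0 : B ≠ 0) (hdet : B.det = 0) :
    ∃ u v : Fin 2 → ZMod p, u ≠ 0 ∧ v ≠ 0 ∧ ∀ i j, B i j = u i * v j := by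
  have hex : ∃ i j, B i j ≠ 0 := by
    by_contra h
    push_neg at h
    exact hB0 (by ext i j; simpa using h i j)
  rw [Matrix.det_fin_two] at hdet
  have e1 : B 1 1 * B 0 0 = B 1 0 * B 0 1 := by linear_combination hdet
  have e2 : B 0 1 * B 1 0 = B 0 0 * B 1 1 := by linear_combination -hdet
  have hmul : ∀ i j i0 j0, B i j * B i0 j0 = B i j0 * B i0 j := by
    intro i j i0 j0
    fin_cases i0 <;> fin_cases j0 <;> fin_cases i <;> fin_cases j <;>
      simp only [Fin.mk_zero, Fin.mk_one, Fin.isValue] <;>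
      first
        | ring1
        | exact e1
        | exact e1.symm
        | exact e2
        | exact e2.symm
  obtain ⟨i0, j0, hk⟩ := hex
  set k := B i0 j0 with hkdef
  refine ⟨fun i => B i j0, fun j => k⁻¹ * B i0 j, ?_, ?_, ?_⟩
  · intro h
    apply hk
    have := congrFun h i0
    simpa using this
  · intro h
    have := congrFun h j0
    simp only [Pi.zero_apply] at this
    rw [← hkdef, inv_mul_cancel₀ hk] at this
    exact one_ne_zero this
  · intro i j
    have h1 : B i j * k = B i j0 * B i0 j := hmul i j i0 j0
    field_simp
    linear_combination h1

end GenCharAux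

/-- For every nonzero non-invertible `B ∈ M₂(𝔽_p)`,
`∑_{u ∈ GL(2,p)} χ(uB) = p − p²`. -/
theorem sum_genChar_mul_zero_divisor (p : ℕ) [Fact p.Prime]
    (B : Matrix (Fin 2) (Fin 2) (ZMod p)) (hB0 : B ≠ 0) (hB : ¬ IsUnit B) :
    (∑ u : (Matrix (Fin 2) (Fin 2) (ZMod p))ˣ,
        genChar p ((u : Matrix (Fin 2) (Fin 2) (ZMod p)) * B)) = (p : ℂ) - (p : ℂ) ^ 2 := by
  classical
  open GenCharAux in
  haveI : NeZero p := ⟨(Fact.out : p.Prime).ne_zero⟩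
  have hdet : B.det = 0 := by
    by_contra h
    exact hB ((Matrix.isUnit_iff_isUnit_det B).mpr (isUnit_iff_ne_zero.mpr h))
  obtain ⟨u, v, hu, hv, huv⟩ := GenCharAux.outer_decomp p B hB0 hdet
  obtain ⟨P, hP, hP0, hP1⟩ := GenCharAux.col_unit p u hu
  obtain ⟨Q, hQ, hQ0, hQ1⟩ := GenCharAux.row_unit p v hv
  set E : GenCharAux.M2 p := !![1, 0; 0, 0] with hE
  have hBPQ : B = P * E * Q := by
    ext i j
    have hPEQ : (P * E * Q) i j = P i 0 * Q 0 j := by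
      simp [hE, Matrix.mul_apply, Fin.sum_univ_two]
    rw [hPEQ, huv i j]
    fin_cases i <;> fin_cases j <;>
      first
        | exact (congrArg₂ HMul.hMul hP0 hQ0).symm
        | exact (congrArg₂ HMul.hMul hP0 hQ1).symm
        | exact (congrArg₂ HMul.hMul hP1 hQ0).symm
        | exact (congrArg₂ HMul.hMul hP1 hQ1).symm
  set Pu : (GenCharAux.M2 p)ˣ := hP.unit with hPu
  set Qu : (GenCharAux.M2 p)ˣ := hQ.unit with hQu
  have hPuv : (Pu : GenCharAux.M2 p) = P := IsUnit.unit_spec hP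
  have hQuv : (Qu : GenCharAux.M2 p) = Q := IsUnit.unit_spec hQ
  set e : (GenCharAux.M2 p)ˣ ≃ (GenCharAux.M2 p)ˣ :=
    (Equiv.mulRight Pu).trans (Equiv.mulLeft Qu) with he
  have htrE : ∀ w : GenCharAux.M2 p, (w * E).trace = w 0 0 := by
    intro w
    simp [hE, Matrix.trace_fin_two, Matrix.mul_apply, Fin.sum_univ_two]
  have hterm : ∀ w : (GenCharAux.M2 p)ˣ,
      genChar p ((w : GenCharAux.M2 p) * B) = GenCharAux.zeta p ^ (((e w : (GenCharAux.M2 p)ˣ) : GenCharAux.M2 p) 0 0).val := by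
    intro w
    rw [GenCharAux.genChar_eq]
    have h1 : ((w : GenCharAux.M2 p) * B).trace
        = (((e w : (GenCharAux.M2 p)ˣ) : GenCharAux.M2 p) * E).trace := by
      have hew : ((e w : (GenCharAux.M2 p)ˣ) : GenCharAux.M2 p) = Q * ((w : GenCharAux.M2 p) * P) := by
        simp [he, Units.val_mul, hPuv, hQuv]
      rw [hBPQ, hew]
      rw [show (w : GenCharAux.M2 p) * (P * E * Q) = (((w : GenCharAux.M2 p) * P) * E) * Q by
        noncomm_ring]
      rw [Matrix.trace_mul_comm]
      rw [← Matrix.mul_assoc]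
    rw [h1, htrE]
  rw [Fintype.sum_congr _ _ hterm]
  rw [Fintype.sum_equiv e
    (fun w => GenCharAux.zeta p ^ (((e w : (GenCharAux.M2 p)ˣ) : GenCharAux.M2 p) 0 0).val)
    (fun w => GenCharAux.zeta p ^ ((w : GenCharAux.M2 p) 0 0).val) (fun w => rfl)]
  exact GenCharAux.sum_corner p
end

section
/- Let Γ > 0 be a real number and define w(A) = Γ·(1 − (1/|GL(2,p)|)·Σ_{u ∈ GL(2,p)} χ(uA)) for A ∈ M_2(F_p). Then w(A) = 0 if A = 0; w(A) = Γ·(1 − 1/((p^2−1)(p−1))) if A ∈ GL(2,p); and w(A) = Γ·p^2/(p^2−1) if A is nonzero and not invertible. -/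
open Finset

namespace HomWeightAux

variable {p : ℕ} [Fact p.Prime]

noncomputable def E : AddChar (ZMod p) ℂ := ZMod.stdAddChar

lemma genChar_eq (A : Matrix (Fin 2) (Fin 2) (ZMod p)) :
    genChar p A = E (Matrix.trace A) := by
  rw [genChar, E, ZMod.stdAddChar_apply, ZMod.toCircle_apply]

lemma sum_e (c : ZMod p) : ∑ i : ZMod p, E (i * c) = if c = 0 then (p : ℂ) else 0 := by
  simp_rw [mul_comm]
  split_ifs with h
  · simp [h, E, ZMod.card]
  · exact AddChar.sum_eq_zero_of_ne_one (ZMod.isPrimitive_stdAddChar p h)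

lemma sum_pair (u v : ZMod p) :
    ∑ x : ZMod p × ZMod p, E (x.1 * u + x.2 * v)
      = if u = 0 ∧ v = 0 then (p : ℂ) ^ 2 else 0 := by
  rw [Fintype.sum_prod_type]
  simp only [AddChar.map_add_eq_mul]
  rw [← Finset.sum_mul_sum, sum_e, sum_e]
  rcases eq_or_ne u 0 with hu | hu <;> rcases eq_or_ne v 0 with hv | hv <;>
    simp [hu, hv, sq]

lemma line_sum (u v : ZMod p) (huv : ¬(u = 0 ∧ v = 0)) (g : ZMod p × ZMod p → ℂ) :
    ∑ y : ZMod p × ZMod p, (if y.1 * u + y.2 * v = 0 then g y else 0)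
      = ∑ t : ZMod p, g (t * v, -(t * u)) := by
  rw [← Finset.sum_filter]
  refine (Finset.sum_bij (fun t _ => ((t * v, -(t * u)) : ZMod p × ZMod p)) ?_ ?_ ?_ ?_).symm
  · intro t _
    simp only [mem_filter, mem_univ, true_and]
    ring
  · intro t₁ _ t₂ _ h
    rw [Prod.ext_iff] at h
    obtain ⟨h1, h2⟩ := h
    rcases not_and_or.mp huv with hu | hv
    · exact mul_right_cancel₀ hu (by simpa using neg_injective h2)
    · exact mul_right_cancel₀ hv h1
  · intro y hy
    simp only [mem_filter, mem_univ, true_and] at hy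
    rcases eq_or_ne v 0 with hv | hv
    · have hu : u ≠ 0 := by tauto
      refine ⟨-(y.2 * u⁻¹), mem_univ _, ?_⟩
      have h1 : y.1 = 0 := by
        have := hy
        rw [hv, mul_zero, add_zero] at this
        exact (mul_eq_zero.mp this).resolve_right hu
      ext <;> field_simp [hv, h1] <;> simp [hv, h1]
    · refine ⟨y.1 * v⁻¹, mem_univ _, ?_⟩
      have h2 : y.2 = -(y.1 * u * v⁻¹) := by
        field_simp
        linear_combination hy
      ext <;> field_simp [h2] <;> linear_combination -hy
  · intro t _; rfl

def mEquiv (p : ℕ) : ((ZMod p × ZMod p) × (ZMod p × ZMod p)) ≃ Matrix (Fin 2) (Fin 2) (ZMod p) where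
  toFun x := !![x.1.1, x.1.2; x.2.1, x.2.2]
  invFun M := ((M 0 0, M 0 1), (M 1 0, M 1 1))
  left_inv x := by simp
  right_inv M := (Matrix.eta_fin_two M).symm

lemma mEquiv_apply (x : (ZMod p × ZMod p) × (ZMod p × ZMod p)) :
    mEquiv p x = !![x.1.1, x.1.2; x.2.1, x.2.2] := rfl

lemma trace_mul_eq (a b c d : ZMod p) (A : Matrix (Fin 2) (Fin 2) (ZMod p)) :
    Matrix.trace (!![a, b; c, d] * A)
      = (a * A 0 0 + b * A 1 0) + (c * A 0 1 + d * A 1 1) := by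
  simp [Matrix.trace_fin_two, Matrix.mul_apply, Fin.sum_univ_two, Matrix.vecMul,
    dotProduct, Matrix.vecHead, Matrix.vecTail]

lemma notUnit_iff (a b c d : ZMod p) :
    ¬ IsUnit !![a, b; c, d] ↔ a * d - b * c = 0 := by
  rw [Matrix.isUnit_iff_isUnit_det, Matrix.det_fin_two_of, isUnit_iff_ne_zero, not_not]

lemma entries_ne (A : Matrix (Fin 2) (Fin 2) (ZMod p)) (hA : A ≠ 0)
    (h1 : A 0 0 = 0) (h2 : A 1 0 = 0) (h3 : A 0 1 = 0) (h4 : A 1 1 = 0) : False := by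
  apply hA
  rw [Matrix.eta_fin_two A, h1, h2, h3, h4]
  ext i j
  fin_cases i <;> fin_cases j <;> simp

lemma sum_all (A : Matrix (Fin 2) (Fin 2) (ZMod p)) (hA : A ≠ 0) :
    ∑ M : Matrix (Fin 2) (Fin 2) (ZMod p), E (Matrix.trace (M * A)) = 0 := by
  rw [← Equiv.sum_comp (mEquiv p) (fun M => E (Matrix.trace (M * A)))]
  simp only [mEquiv_apply, trace_mul_eq]
  have hsplit : ∀ x y : ZMod p × ZMod p,
      E ((x.1 * A 0 0 + x.2 * A 1 0) + (y.1 * A 0 1 + y.2 * A 1 1))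
        = E (x.1 * A 0 0 + x.2 * A 1 0) * E (y.1 * A 0 1 + y.2 * A 1 1) :=
    fun x y => AddChar.map_add_eq_mul E _ _
  rw [Fintype.sum_prod_type]
  simp only [hsplit]
  rw [← Finset.sum_mul_sum, sum_pair, sum_pair]
  rcases em (A 0 0 = 0 ∧ A 1 0 = 0) with h1 | h1
  · have h2 : ¬(A 0 1 = 0 ∧ A 1 1 = 0) := fun h2 =>
      entries_ne A hA h1.1 h1.2 h2.1 h2.2
    rw [if_neg h2, mul_zero]
  · rw [if_neg h1, zero_mul]

lemma sum_sing (A : Matrix (Fin 2) (Fin 2) (ZMod p)) (hA : A ≠ 0) :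
    ∑ M : Matrix (Fin 2) (Fin 2) (ZMod p),
        (if IsUnit M then 0 else E (Matrix.trace (M * A)))
      = if IsUnit A then -(p : ℂ) else (p : ℂ) ^ 2 - p := by
  have hdet : A 0 0 * A 1 1 - A 0 1 * A 1 0 = Matrix.det A := (Matrix.det_fin_two A).symm
  have hunit : IsUnit A ↔ Matrix.det A ≠ 0 := by
    rw [Matrix.isUnit_iff_isUnit_det, isUnit_iff_ne_zero]
  rw [← Equiv.sum_comp (mEquiv p)
    (fun M => if IsUnit M then 0 else E (Matrix.trace (M * A)))]
  simp only [mEquiv_apply, trace_mul_eq]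
  have flip : ∀ a b c d : ZMod p, ∀ z : ℂ,
      (if IsUnit !![a, b; c, d] then 0 else z) = (if a * d - b * c = 0 then z else 0) := by
    intro a b c d z
    rcases em (a * d - b * c = 0) with h | h
    · rw [if_pos h, if_neg ((notUnit_iff a b c d).mpr h)]
    · rw [if_neg h, if_pos (not_not.mp (fun hn => h ((notUnit_iff a b c d).mp hn)))]
  simp only [flip]
  rw [Fintype.sum_prod_type]
  have inner : ∀ x : ZMod p × ZMod p, x ≠ 0 →
      (∑ y : ZMod p × ZMod p,
        if x.1 * y.2 - x.2 * y.1 = 0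
        then E ((x.1 * A 0 0 + x.2 * A 1 0) + (y.1 * A 0 1 + y.2 * A 1 1)) else 0)
      = E (x.1 * A 0 0 + x.2 * A 1 0)
          * (if x.1 * A 0 1 + x.2 * A 1 1 = 0 then (p : ℂ) else 0) := by
    intro x hx
    have hcond : ∀ y : ZMod p × ZMod p,
        (x.1 * y.2 - x.2 * y.1 = 0) = (y.1 * (-x.2) + y.2 * x.1 = 0) := by
      intro y
      have h : x.1 * y.2 - x.2 * y.1 = y.1 * (-x.2) + y.2 * x.1 := by ring
      rw [h]
    have hsplit : ∀ y : ZMod p × ZMod p,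
        E ((x.1 * A 0 0 + x.2 * A 1 0) + (y.1 * A 0 1 + y.2 * A 1 1))
          = E (x.1 * A 0 0 + x.2 * A 1 0) * E (y.1 * A 0 1 + y.2 * A 1 1) :=
      fun y => AddChar.map_add_eq_mul E _ _
    have hpull : ∀ (c : Prop) [Decidable c] (z : ℂ),
        (if c then E (x.1 * A 0 0 + x.2 * A 1 0) * z else 0)
          = E (x.1 * A 0 0 + x.2 * A 1 0) * (if c then z else 0) := by
      intro c _ z
      split_ifs <;> simp
    simp only [hcond, hsplit, hpull]
    rw [← Finset.mul_sum]
    have huv : ¬((-x.2 : ZMod p) = 0 ∧ x.1 = 0) := by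
      rintro ⟨h2, h1⟩
      exact hx (Prod.ext h1 (neg_eq_zero.mp h2))
    rw [line_sum (-x.2) x.1 huv (fun y => E (y.1 * A 0 1 + y.2 * A 1 1))]
    have harg : ∀ t : ZMod p,
        (t * x.1) * A 0 1 + (-(t * -x.2)) * A 1 1
          = t * (x.1 * A 0 1 + x.2 * A 1 1) := by
      intro t; ring
    simp only [harg]
    rw [sum_e]
  rw [← Finset.sum_erase_add _ _ (mem_univ (0 : ZMod p × ZMod p))]
  have hzero : (∑ y : ZMod p × ZMod p,
      if (0 : ZMod p × ZMod p).1 * y.2 - (0 : ZMod p × ZMod p).2 * y.1 = 0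
      then E (((0 : ZMod p × ZMod p).1 * A 0 0 + (0 : ZMod p × ZMod p).2 * A 1 0)
        + (y.1 * A 0 1 + y.2 * A 1 1)) else 0)
      = if A 0 1 = 0 ∧ A 1 1 = 0 then (p : ℂ) ^ 2 else 0 := by
    simp only [Prod.fst_zero, Prod.snd_zero, zero_mul, sub_zero, zero_add, if_pos rfl]
    exact sum_pair _ _
  rw [Finset.sum_congr rfl (fun x hx => inner x (Finset.ne_of_mem_erase hx)), hzero]
  rw [Finset.sum_erase_eq_sub (mem_univ _)]
  have hat0 : E ((0 : ZMod p × ZMod p).1 * A 0 0 + (0 : ZMod p × ZMod p).2 * A 1 0)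
      * (if (0 : ZMod p × ZMod p).1 * A 0 1 + (0 : ZMod p × ZMod p).2 * A 1 1 = 0
          then (p : ℂ) else 0) = (p : ℂ) := by
    simp
  rw [hat0]
  have hswap : ∀ y : ZMod p × ZMod p,
      E (y.1 * A 0 0 + y.2 * A 1 0)
        * (if y.1 * A 0 1 + y.2 * A 1 1 = 0 then (p : ℂ) else 0)
      = if y.1 * A 0 1 + y.2 * A 1 1 = 0
        then (p : ℂ) * E (y.1 * A 0 0 + y.2 * A 1 0) else 0 := by
    intro y
    split_ifs <;> ring
  simp only [hswap]
  rcases em (A 0 1 = 0 ∧ A 1 1 = 0) with hbd | hbd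
  · have hAn : ¬ IsUnit A := by
      rw [hunit, not_not, ← hdet, hbd.1, hbd.2]
      ring
    rw [if_neg hAn, if_pos hbd]
    have htriv : ∀ y : ZMod p × ZMod p,
        (if y.1 * A 0 1 + y.2 * A 1 1 = 0
          then (p : ℂ) * E (y.1 * A 0 0 + y.2 * A 1 0) else 0)
        = (p : ℂ) * E (y.1 * A 0 0 + y.2 * A 1 0) := by
      intro y
      rw [if_pos (by rw [hbd.1, hbd.2]; ring)]
    simp only [htriv]
    rw [← Finset.mul_sum, sum_pair,
      if_neg (fun h1 => entries_ne A hA h1.1 h1.2 hbd.1 hbd.2)]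
    ring
  · rw [line_sum (A 0 1) (A 1 1) hbd
      (fun y => (p : ℂ) * E (y.1 * A 0 0 + y.2 * A 1 0)), if_neg hbd]
    have harg2 : ∀ t : ZMod p,
        (t * A 1 1) * A 0 0 + (-(t * A 0 1)) * A 1 0 = t * Matrix.det A := by
      intro t
      rw [← hdet]; ring
    simp only [harg2]
    rw [← Finset.mul_sum, sum_e]
    rcases em (IsUnit A) with hu | hu
    · rw [if_pos hu, if_neg (hunit.mp hu)]
      ring
    · rw [if_neg hu, if_pos (not_not.mp (fun h => hu (hunit.mpr h)))]
      ring

lemma units_sum (f : Matrix (Fin 2) (Fin 2) (ZMod p) → ℂ) :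
    ∑ u : (Matrix (Fin 2) (Fin 2) (ZMod p))ˣ, f ↑u
      = ∑ M ∈ univ.filter (fun M : Matrix (Fin 2) (Fin 2) (ZMod p) => IsUnit M), f M := by
  refine Finset.sum_bij (fun u _ => (u : Matrix (Fin 2) (Fin 2) (ZMod p))) ?_ ?_ ?_ ?_
  · intro u _
    simp [u.isUnit]
  · intro a _ b _ h
    exact Units.ext h
  · intro M hM
    exact ⟨(mem_filter.mp hM).2.unit, mem_univ _, (mem_filter.mp hM).2.unit_spec⟩
  · intro u _; rfl

lemma card_units_eq :
    ((Fintype.card (Matrix (Fin 2) (Fin 2) (ZMod p))ˣ : ℕ) : ℂ)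
      = ((p : ℂ) ^ 2 - 1) * ((p : ℂ) ^ 2 - p) := by
  have h := Matrix.card_GL_field (𝔽 := ZMod p) (n := 2)
  rw [ZMod.card] at h
  have h2 : Fintype.card (Matrix (Fin 2) (Fin 2) (ZMod p))ˣ = (p ^ 2 - 1) * (p ^ 2 - p) := by
    rw [← Nat.card_eq_fintype_card,
      show (Nat.card (Matrix (Fin 2) (Fin 2) (ZMod p))ˣ) = Nat.card (GL (Fin 2) (ZMod p)) from
        rfl, h]
    simp [Fin.prod_univ_two]
  rw [h2]
  have hp2 : 1 ≤ p ^ 2 := Nat.one_le_pow _ _ (Fact.out (p := p.Prime)).pos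
  have hp2' : p ≤ p ^ 2 := Nat.le_self_pow (by norm_num) p
  push_cast [Nat.cast_sub hp2, Nat.cast_sub hp2']
  ring

end HomWeightAux

open HomWeightAux

/-- The homogeneous weight `w(A) = Γ(1 − |GL(2,p)|⁻¹ ∑_{u ∈ GL(2,p)} χ(uA))` on `M₂(𝔽_p)`
takes the value `0` at `A = 0`, the value `Γ(1 − 1/((p²−1)(p−1)))` on `GL(2,p)`, and the
value `Γ p²/(p²−1)` on the nonzero non-invertible matrices. -/
theorem homogeneous_weight_on_M2 (p : ℕ) [Fact p.Prime] (Γ : ℝ) (hΓ : 0 < Γ)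
    (w : Matrix (Fin 2) (Fin 2) (ZMod p) → ℂ)
    (hw : ∀ A, w A = (Γ : ℂ) *
      (1 - (1 / (Fintype.card (Matrix (Fin 2) (Fin 2) (ZMod p))ˣ : ℂ)) *
        ∑ u : (Matrix (Fin 2) (Fin 2) (ZMod p))ˣ,
          genChar p ((u : Matrix (Fin 2) (Fin 2) (ZMod p)) * A))) :
    w 0 = 0 ∧
    (∀ A : Matrix (Fin 2) (Fin 2) (ZMod p), IsUnit A →
      w A = (Γ : ℂ) * (1 - 1 / (((p : ℂ) ^ 2 - 1) * ((p : ℂ) - 1)))) ∧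
    (∀ A : Matrix (Fin 2) (Fin 2) (ZMod p), A ≠ 0 → ¬ IsUnit A →
      w A = (Γ : ℂ) * ((p : ℂ) ^ 2 / ((p : ℂ) ^ 2 - 1))) := by
  classical
  have hp : Nat.Prime p := Fact.out
  have hq0 : (p : ℂ) ≠ 0 := Nat.cast_ne_zero.mpr hp.ne_zero
  have hq1 : (p : ℂ) - 1 ≠ 0 := by
    rw [sub_ne_zero]
    exact_mod_cast hp.ne_one
  have hq1' : (p : ℂ) + 1 ≠ 0 := by
    have h := Nat.cast_ne_zero (R := ℂ).mpr (Nat.succ_ne_zero p)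
    push_cast at h
    exact h
  have hq2 : (p : ℂ) ^ 2 - 1 ≠ 0 := by
    have h : (p : ℂ) ^ 2 - 1 = ((p : ℂ) - 1) * ((p : ℂ) + 1) := by ring
    rw [h]; exact mul_ne_zero hq1 hq1'
  have hq2p : (p : ℂ) ^ 2 - p ≠ 0 := by
    have h : (p : ℂ) ^ 2 - p = (p : ℂ) * ((p : ℂ) - 1) := by ring
    rw [h]; exact mul_ne_zero hq0 hq1
  have hN := card_units_eq (p := p)
  have hNne : ((Fintype.card (Matrix (Fin 2) (Fin 2) (ZMod p))ˣ : ℕ) : ℂ) ≠ 0 := by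
    rw [hN]; exact mul_ne_zero hq2 hq2p
  -- the key sum identity for A ≠ 0
  have key : ∀ A : Matrix (Fin 2) (Fin 2) (ZMod p), A ≠ 0 →
      ∑ u : (Matrix (Fin 2) (Fin 2) (ZMod p))ˣ,
          genChar p ((u : Matrix (Fin 2) (Fin 2) (ZMod p)) * A)
        = -(if IsUnit A then -(p : ℂ) else (p : ℂ) ^ 2 - p) := by
    intro A hA
    have h1 : ∑ u : (Matrix (Fin 2) (Fin 2) (ZMod p))ˣ,
        genChar p ((u : Matrix (Fin 2) (Fin 2) (ZMod p)) * A)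
        = ∑ M ∈ univ.filter (fun M : Matrix (Fin 2) (Fin 2) (ZMod p) => IsUnit M),
            E (Matrix.trace (M * A)) := by
      simp only [genChar_eq]
      exact units_sum (fun M => E (Matrix.trace (M * A)))
    have h2 : (∑ M ∈ univ.filter (fun M : Matrix (Fin 2) (Fin 2) (ZMod p) => IsUnit M),
          E (Matrix.trace (M * A)))
        + ∑ M ∈ univ.filter (fun M : Matrix (Fin 2) (Fin 2) (ZMod p) => ¬ IsUnit M),
            E (Matrix.trace (M * A))
        = ∑ M : Matrix (Fin 2) (Fin 2) (ZMod p), E (Matrix.trace (M * A)) :=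
      Finset.sum_filter_add_sum_filter_not _ _ _
    have h3 : ∑ M ∈ univ.filter (fun M : Matrix (Fin 2) (Fin 2) (ZMod p) => ¬ IsUnit M),
          E (Matrix.trace (M * A))
        = ∑ M : Matrix (Fin 2) (Fin 2) (ZMod p),
            (if IsUnit M then 0 else E (Matrix.trace (M * A))) := by
      rw [Finset.sum_filter]
      simp only [ite_not]
    have h4 := sum_all A hA
    rw [h1, ← sum_sing A hA, ← h3]
    linear_combination h2 + h4
  refine ⟨?_, ?_, ?_⟩
  · rw [hw 0]
    have h1 : ∀ u : (Matrix (Fin 2) (Fin 2) (ZMod p))ˣ,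
        genChar p ((u : Matrix (Fin 2) (Fin 2) (ZMod p)) * 0) = 1 := by
      intro u
      rw [mul_zero, genChar_eq]
      simp
    simp only [h1, Finset.sum_const, Finset.card_univ, nsmul_eq_mul, mul_one]
    rw [one_div, inv_mul_cancel₀ hNne]
    ring
  · intro A hA
    have hA0 : A ≠ 0 := hA.ne_zero
    rw [hw A, key A hA0, if_pos hA]
    rw [hN]
    field_simp
  · intro A hA0 hA
    rw [hw A, key A hA0, if_neg hA]
    rw [hN]
    field_simp
    ring
end

section
/- Let Γ > 0 be a real number and define w: M_2(F_p) → ℝ by w(0) = 0, w(A) = Γ·(1 − 1/((p^2−1)(p−1))) if A is invertible, and w(A) = Γ·p^2/(p^2−1) otherwise. Then w is a homogeneous weight with average value Γ: (H1) whenever two matrices x, y generate the same principal left ideal (i.e., {rx : r ∈ M_2(F_p)} = {ry : r ∈ M_2(F_p)}), then w(x) = w(y), and symmetrically for principal right ideals; and (H2) for every nonzero x ∈ M_2(F_p), the sum of w(y) over all y in the left ideal Rx = {rx : r ∈ M_2(F_p)} equals Γ·|Rx|, and symmetrically for the right ideal xR. -/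
open Finset Matrix

section AuxHomog

variable {p : ℕ} [Fact p.Prime]

private lemma hwg_unit_of_mul_right {x y : Matrix (Fin 2) (Fin 2) (ZMod p)}
    (h : IsUnit (x * y)) : IsUnit y := by
  rw [Matrix.isUnit_iff_isUnit_det] at h ⊢
  rw [Matrix.det_mul] at h
  exact isUnit_of_mul_isUnit_right h

private lemma hwg_unit_of_mul_left {x y : Matrix (Fin 2) (Fin 2) (ZMod p)}
    (h : IsUnit (x * y)) : IsUnit x := by
  rw [Matrix.isUnit_iff_isUnit_det] at h ⊢
  rw [Matrix.det_mul] at h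
  exact isUnit_of_mul_isUnit_left h

private lemma hwg_rank_one_decomp (x : Matrix (Fin 2) (Fin 2) (ZMod p))
    (hx : x ≠ 0) (hu : ¬ IsUnit x) :
    ∃ d u : Fin 2 → ZMod p, d ≠ 0 ∧ u ≠ 0 ∧ x = Matrix.vecMulVec d u := by
  have hdet : x.det = 0 := by
    by_contra h
    exact hu ((Matrix.isUnit_iff_isUnit_det x).2 (isUnit_iff_ne_zero.2 h))
  rw [Matrix.det_fin_two, sub_eq_zero] at hdet
  by_cases h00 : x 0 0 = 0
  · by_cases h01 : x 0 1 = 0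
    · refine ⟨![0, 1], ![x 1 0, x 1 1], ?_, ?_, ?_⟩
      · intro h; simpa using congrFun h 1
      · intro h
        apply hx
        ext i j
        fin_cases i <;> fin_cases j <;>
          first
          | exact h00 | exact h01
          | simpa using congrFun h 0
          | simpa using congrFun h 1
      · ext i j
        fin_cases i <;> fin_cases j <;>
          simp [Matrix.vecMulVec_apply, h00, h01]
    · have h10 : x 1 0 = 0 := by
        have h2 : x 0 1 * x 1 0 = 0 := by rw [← hdet, h00, zero_mul]
        rcases mul_eq_zero.mp h2 with h | h
        · exact absurd h h01
        · exact h
      refine ⟨![1, x 1 1 * (x 0 1)⁻¹], ![0, x 0 1], ?_, ?_, ?_⟩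
      · intro h; simpa using congrFun h 0
      · intro h; exact h01 (by simpa using congrFun h 1)
      · ext i j
        fin_cases i <;> fin_cases j <;>
          simp [Matrix.vecMulVec_apply, h00, h10, mul_assoc, inv_mul_cancel₀ h01]
  · refine ⟨![1, x 1 0 * (x 0 0)⁻¹], ![x 0 0, x 0 1], ?_, ?_, ?_⟩
    · intro h; simpa using congrFun h 0
    · intro h; exact h00 (by simpa using congrFun h 0)
    · ext i j
      fin_cases i <;> fin_cases j
      · simp [Matrix.vecMulVec_apply]
      · simp [Matrix.vecMulVec_apply]
      · simp [Matrix.vecMulVec_apply, mul_assoc, inv_mul_cancel₀ h00]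
      · simp only [Matrix.vecMulVec_apply]
        show x 1 1 = ![(1 : ZMod p), x 1 0 * (x 0 0)⁻¹] 1 * ![x 0 0, x 0 1] 1
        show x 1 1 = x 1 0 * (x 0 0)⁻¹ * x 0 1
        field_simp
        linear_combination hdet

private lemma hwg_mul_vecMulVec (r : Matrix (Fin 2) (Fin 2) (ZMod p)) (d u : Fin 2 → ZMod p) :
    r * Matrix.vecMulVec d u = Matrix.vecMulVec (r.mulVec d) u := by
  ext i j
  simp only [Matrix.mul_apply, Matrix.vecMulVec_apply, Matrix.mulVec, dotProduct,
    Finset.sum_mul, mul_assoc]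

private lemma hwg_mulVec_surjective {d : Fin 2 → ZMod p} (hd : d ≠ 0) :
    Function.Surjective (fun r : Matrix (Fin 2) (Fin 2) (ZMod p) => r.mulVec d) := by
  obtain ⟨i, hi⟩ : ∃ i, d i ≠ 0 := by
    by_contra h; push_neg at h; exact hd (funext h)
  intro c
  refine ⟨Matrix.of fun a b => if b = i then c a * (d i)⁻¹ else 0, ?_⟩
  funext a
  simp only [Matrix.mulVec, dotProduct, Matrix.of_apply, ite_mul, zero_mul]
  rw [Finset.sum_ite_eq' Finset.univ i fun b => c a * (d i)⁻¹ * d b]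
  simp [mul_assoc, inv_mul_cancel₀ hi]

private lemma hwg_cardM : Fintype.card (Matrix (Fin 2) (Fin 2) (ZMod p)) = p ^ 4 := by
  rw [Fintype.card_congr (Matrix.of (m := Fin 2) (n := Fin 2) (α := ZMod p)).symm,
    Fintype.card_fun, Fintype.card_fun]
  simp [ZMod.card]; ring

private lemma hwg_card_left_ideal (x : Matrix (Fin 2) (Fin 2) (ZMod p))
    (hx : x ≠ 0) (hu : ¬ IsUnit x) :
    (Finset.image (fun r : Matrix (Fin 2) (Fin 2) (ZMod p) => r * x) Finset.univ).card
      = p ^ 2 := by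
  obtain ⟨d, u, hd, hu0, rfl⟩ := hwg_rank_one_decomp x hx hu
  have h1 : Finset.image (fun r : Matrix (Fin 2) (Fin 2) (ZMod p) => r * Matrix.vecMulVec d u)
      Finset.univ
      = Finset.image (fun c : Fin 2 → ZMod p => Matrix.vecMulVec c u) Finset.univ := by
    simp only [hwg_mul_vecMulVec]
    rw [show (fun r : Matrix (Fin 2) (Fin 2) (ZMod p) => Matrix.vecMulVec (r.mulVec d) u)
        = (fun c : Fin 2 → ZMod p => Matrix.vecMulVec c u) ∘ (fun r => r.mulVec d) from rfl,
      ← Finset.image_image, Finset.image_univ_of_surjective (hwg_mulVec_surjective hd)]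
  have hinj : Function.Injective (fun c : Fin 2 → ZMod p => Matrix.vecMulVec c u) := by
    obtain ⟨j, hj⟩ : ∃ j, u j ≠ 0 := by
      by_contra h; push_neg at h; exact hu0 (funext h)
    intro c c' h
    funext a
    have h2 : Matrix.vecMulVec c u a j = Matrix.vecMulVec c' u a j :=
      congrFun (congrFun h a) j
    rw [Matrix.vecMulVec_apply, Matrix.vecMulVec_apply] at h2
    exact mul_right_cancel₀ hj h2
  rw [h1, Finset.card_image_of_injective _ hinj, Finset.card_univ, Fintype.card_fun]
  simp [ZMod.card]

private lemma hwg_card_units :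
    (Finset.univ.filter (fun A : Matrix (Fin 2) (Fin 2) (ZMod p) => IsUnit A)).card
      = (p ^ 2 - 1) * (p ^ 2 - p) := by
  have e : {A : Matrix (Fin 2) (Fin 2) (ZMod p) // IsUnit A} ≃ (Matrix (Fin 2) (Fin 2) (ZMod p))ˣ :=
    { toFun := fun a => a.2.unit
      invFun := fun u => ⟨↑u, u.isUnit⟩
      left_inv := fun a => Subtype.ext a.2.unit_spec
      right_inv := fun u => Units.ext u.isUnit.unit_spec }
  rw [← Fintype.card_subtype, Fintype.card_congr e]
  have h := Matrix.card_GL_field (𝔽 := ZMod p) 2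
  rw [Nat.card_eq_fintype_card] at h
  rw [Fintype.card_congr (Equiv.refl _ : (Matrix (Fin 2) (Fin 2) (ZMod p))ˣ ≃ GL (Fin 2) (ZMod p)), h]
  simp [Fin.prod_univ_two, ZMod.card]

end AuxHomog

section Main

variable {p : ℕ} [Fact p.Prime]

private lemma hwg_sum_left (Γ : ℝ) (w : Matrix (Fin 2) (Fin 2) (ZMod p) → ℝ)
    (hw : ∀ A, w A =
      if A = 0 then 0
      else if IsUnit A then Γ * (1 - 1 / (((p : ℝ) ^ 2 - 1) * ((p : ℝ) - 1)))
      else Γ * ((p : ℝ) ^ 2 / ((p : ℝ) ^ 2 - 1)))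
    (x : Matrix (Fin 2) (Fin 2) (ZMod p)) (hx : x ≠ 0) :
    ∑ y ∈ Finset.image (fun r : Matrix (Fin 2) (Fin 2) (ZMod p) => r * x) Finset.univ, w y =
      Γ * (Finset.image (fun r : Matrix (Fin 2) (Fin 2) (ZMod p) => r * x) Finset.univ).card := by
  have hp := (Fact.out : p.Prime)
  have hp2 : (2:ℝ) ≤ (p:ℝ) := by exact_mod_cast hp.two_le
  have hden1 : ((p:ℝ)^2 - 1) ≠ 0 := by nlinarith
  have hden2 : ((p:ℝ) - 1) ≠ 0 := by nlinarith
  have hw0 : w 0 = 0 := by rw [hw]; simp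
  have h1 : 1 ≤ p ^ 2 := Nat.one_le_pow _ _ hp.pos
  have h2 : p ≤ p ^ 2 := Nat.le_self_pow (by norm_num) p
  have h4 : 1 ≤ p ^ 4 := Nat.one_le_pow _ _ hp.pos
  have c1 : ((p^2 - 1 : ℕ) : ℝ) = (p:ℝ)^2 - 1 := by rw [Nat.cast_sub h1]; push_cast; ring
  have c2 : ((p^2 - p : ℕ) : ℝ) = (p:ℝ)^2 - p := by rw [Nat.cast_sub h2]; push_cast; ring
  by_cases hxu : IsUnit x
  · have hS : Finset.image (fun r : Matrix (Fin 2) (Fin 2) (ZMod p) => r * x) Finset.univ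
        = Finset.univ := by
      apply Finset.image_univ_of_surjective
      intro y
      obtain ⟨v, rfl⟩ := hxu
      exact ⟨y * (↑v⁻¹ : Matrix (Fin 2) (Fin 2) (ZMod p)), Units.inv_mul_cancel_right y v⟩
    rw [hS]
    have hcard : (Finset.univ : Finset (Matrix (Fin 2) (Fin 2) (ZMod p))).card = p ^ 4 := by
      rw [Finset.card_univ, hwg_cardM]
    set U := (Finset.univ : Finset (Matrix (Fin 2) (Fin 2) (ZMod p))).erase 0 with hU
    have hUcard : U.card = p ^ 4 - 1 := by
      rw [hU, Finset.card_erase_of_mem (Finset.mem_univ _), hcard]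
    have hfe : U.filter (fun A => IsUnit A)
        = Finset.univ.filter (fun A : Matrix (Fin 2) (Fin 2) (ZMod p) => IsUnit A) := by
      ext A
      simp only [hU, Finset.mem_filter, Finset.mem_erase, Finset.mem_univ, true_and, and_true]
      exact ⟨fun h => h.2, fun h => ⟨h.ne_zero, h⟩⟩
    have hfc := Finset.card_filter_add_card_filter_not
      (s := U) (p := fun A => IsUnit A)
    rw [hfe, hwg_card_units, hUcard] at hfc
    have hmc : (U.filter fun A => ¬ IsUnit A).card = p^4 - 1 - (p^2-1)*(p^2-p) := by omega
    have le1 : (p^2-1)*(p^2-p) ≤ p^4 - 1 := by omega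
    have c3 : ((p^4 - 1 - (p^2-1)*(p^2-p) : ℕ) : ℝ)
        = (p:ℝ)^4 - 1 - ((p:ℝ)^2-1)*((p:ℝ)^2-p) := by
      rw [Nat.cast_sub le1, Nat.cast_sub h4, Nat.cast_mul, c1, c2]; push_cast; ring
    have hcu : ∀ A ∈ U.filter (fun A => IsUnit A),
        w A = Γ * (1 - 1/(((p:ℝ)^2-1)*((p:ℝ)-1))) := by
      intro A hA
      have h := Finset.mem_filter.1 hA
      rw [hw, if_neg (Finset.ne_of_mem_erase h.1), if_pos h.2]
    have hcn : ∀ A ∈ U.filter (fun A => ¬ IsUnit A),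
        w A = Γ * ((p:ℝ)^2/((p:ℝ)^2-1)) := by
      intro A hA
      have h := Finset.mem_filter.1 hA
      rw [hw, if_neg (Finset.ne_of_mem_erase h.1), if_neg h.2]
    rw [← Finset.sum_erase Finset.univ (f := w) (a := 0) hw0, ← hU,
      ← Finset.sum_filter_add_sum_filter_not U (fun A => IsUnit A) w,
      Finset.sum_congr rfl hcu, Finset.sum_congr rfl hcn,
      Finset.sum_const, Finset.sum_const, nsmul_eq_mul, nsmul_eq_mul, hfe,
      hwg_card_units, hmc, hcard, c3, Nat.cast_mul, c1, c2]
    push_cast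
    field_simp
    ring
  · set S := Finset.image (fun r : Matrix (Fin 2) (Fin 2) (ZMod p) => r * x) Finset.univ
      with hSdef
    have hcard : S.card = p ^ 2 := hwg_card_left_ideal x hx hxu
    have h0S : (0 : Matrix (Fin 2) (Fin 2) (ZMod p)) ∈ S :=
      Finset.mem_image.2 ⟨0, Finset.mem_univ _, by simp⟩
    have hconst : ∀ y ∈ S.erase 0, w y = Γ * ((p : ℝ) ^ 2 / ((p : ℝ) ^ 2 - 1)) := by
      intro y hy
      obtain ⟨r, -, rfl⟩ := Finset.mem_image.1 (Finset.mem_of_mem_erase hy)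
      rw [hw, if_neg (Finset.ne_of_mem_erase hy),
        if_neg (fun h => hxu (hwg_unit_of_mul_right h))]
    rw [← Finset.sum_erase S (f := w) (a := 0) hw0, Finset.sum_congr rfl hconst,
      Finset.sum_const, nsmul_eq_mul, Finset.card_erase_of_mem h0S, hcard, c1]
    field_simp
    push_cast; ring

end Main

/-- The weight `w` on `M₂(𝔽_p)` given by `w(0) = 0`, `w(A) = Γ(1 − 1/((p²−1)(p−1)))` for
`A ∈ GL(2,p)` and `w(A) = Γ p²/(p²−1)` otherwise, is a homogeneous weight with average
value `Γ`: it is constant on generators of the same principal one-sided ideal (H1), and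
its sum over any nonzero principal one-sided ideal `Rx` (resp. `xR`) is `Γ·|Rx|`
(resp. `Γ·|xR|`) (H2). -/
theorem homogeneous_weight_is_homogeneous (p : ℕ) [Fact p.Prime] (Γ : ℝ) (hΓ : 0 < Γ)
    (w : Matrix (Fin 2) (Fin 2) (ZMod p) → ℝ)
    (hw : ∀ A, w A =
      if A = 0 then 0
      else if IsUnit A then Γ * (1 - 1 / (((p : ℝ) ^ 2 - 1) * ((p : ℝ) - 1)))
      else Γ * ((p : ℝ) ^ 2 / ((p : ℝ) ^ 2 - 1))) :
    w 0 = 0 ∧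
    (∀ x y : Matrix (Fin 2) (Fin 2) (ZMod p),
      Set.range (fun r : Matrix (Fin 2) (Fin 2) (ZMod p) => r * x) =
        Set.range (fun r : Matrix (Fin 2) (Fin 2) (ZMod p) => r * y) → w x = w y) ∧
    (∀ x y : Matrix (Fin 2) (Fin 2) (ZMod p),
      Set.range (fun r : Matrix (Fin 2) (Fin 2) (ZMod p) => x * r) =
        Set.range (fun r : Matrix (Fin 2) (Fin 2) (ZMod p) => y * r) → w x = w y) ∧
    (∀ x : Matrix (Fin 2) (Fin 2) (ZMod p), x ≠ 0 →
      ∑ y ∈ Finset.image (fun r : Matrix (Fin 2) (Fin 2) (ZMod p) => r * x) Finset.univ, w y =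
        Γ * (Finset.image (fun r : Matrix (Fin 2) (Fin 2) (ZMod p) => r * x) Finset.univ).card) ∧
    (∀ x : Matrix (Fin 2) (Fin 2) (ZMod p), x ≠ 0 →
      ∑ y ∈ Finset.image (fun r : Matrix (Fin 2) (Fin 2) (ZMod p) => x * r) Finset.univ, w y =
        Γ * (Finset.image (fun r : Matrix (Fin 2) (Fin 2) (ZMod p) => x * r) Finset.univ).card) := by
  classical
  have hw0 : w 0 = 0 := by rw [hw]; simp
  have hwT : ∀ A : Matrix (Fin 2) (Fin 2) (ZMod p), w Aᵀ = w A := by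
    intro A
    have hiu : IsUnit Aᵀ ↔ IsUnit A := by
      rw [Matrix.isUnit_iff_isUnit_det, Matrix.isUnit_iff_isUnit_det A, Matrix.det_transpose]
    rw [hw, hw A]
    simp only [Matrix.transpose_eq_zero, hiu]
  refine ⟨hw0, ?_, ?_, ?_, ?_⟩
  · -- H1 left
    intro x y h
    have hxy : ∃ r, x = r * y := by
      have hm : x ∈ Set.range (fun r : Matrix (Fin 2) (Fin 2) (ZMod p) => r * y) :=
        h ▸ ⟨1, one_mul x⟩
      obtain ⟨r, hr⟩ := hm
      exact ⟨r, hr.symm⟩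
    have hyx : ∃ s, y = s * x := by
      have hm : y ∈ Set.range (fun r : Matrix (Fin 2) (Fin 2) (ZMod p) => r * x) :=
        h.symm ▸ ⟨1, one_mul y⟩
      obtain ⟨s, hs⟩ := hm
      exact ⟨s, hs.symm⟩
    obtain ⟨r, hr⟩ := hxy
    obtain ⟨s, hs⟩ := hyx
    have h0 : x = 0 ↔ y = 0 :=
      ⟨fun h' => by rw [hs, h', mul_zero], fun h' => by rw [hr, h', mul_zero]⟩
    have hiu : IsUnit x ↔ IsUnit y :=
      ⟨fun h' => hwg_unit_of_mul_right (hr ▸ h'),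
       fun h' => hwg_unit_of_mul_right (hs ▸ h')⟩
    rw [hw x, hw y]
    simp only [h0, hiu]
  · -- H1 right
    intro x y h
    have hxy : ∃ r, x = y * r := by
      have hm : x ∈ Set.range (fun r : Matrix (Fin 2) (Fin 2) (ZMod p) => y * r) :=
        h ▸ ⟨1, mul_one x⟩
      obtain ⟨r, hr⟩ := hm
      exact ⟨r, hr.symm⟩
    have hyx : ∃ s, y = x * s := by
      have hm : y ∈ Set.range (fun r : Matrix (Fin 2) (Fin 2) (ZMod p) => x * r) :=
        h.symm ▸ ⟨1, mul_one y⟩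
      obtain ⟨s, hs⟩ := hm
      exact ⟨s, hs.symm⟩
    obtain ⟨r, hr⟩ := hxy
    obtain ⟨s, hs⟩ := hyx
    have h0 : x = 0 ↔ y = 0 :=
      ⟨fun h' => by rw [hs, h', zero_mul], fun h' => by rw [hr, h', zero_mul]⟩
    have hiu : IsUnit x ↔ IsUnit y :=
      ⟨fun h' => hwg_unit_of_mul_left (hr ▸ h'),
       fun h' => hwg_unit_of_mul_left (hs ▸ h')⟩
    rw [hw x, hw y]
    simp only [h0, hiu]
  · -- H2 left
    intro x hx
    exact hwg_sum_left Γ w hw x hx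
  · -- H2 right
    intro x hx
    have hxT : xᵀ ≠ 0 := fun h => hx (by simpa using congrArg Matrix.transpose h)
    have hTinj : Function.Injective (Matrix.transpose :
        Matrix (Fin 2) (Fin 2) (ZMod p) → Matrix (Fin 2) (Fin 2) (ZMod p)) := by
      intro a b hab
      simpa using congrArg Matrix.transpose hab
    have him : Finset.image (fun r : Matrix (Fin 2) (Fin 2) (ZMod p) => x * r) Finset.univ
        = Finset.image Matrix.transpose
            (Finset.image (fun r : Matrix (Fin 2) (Fin 2) (ZMod p) => r * xᵀ) Finset.univ) := by
      ext z
      simp only [Finset.mem_image, Finset.mem_univ, true_and]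
      constructor
      · rintro ⟨r, rfl⟩
        exact ⟨rᵀ * xᵀ, ⟨rᵀ, rfl⟩, by rw [Matrix.transpose_mul, Matrix.transpose_transpose,
          Matrix.transpose_transpose]⟩
      · rintro ⟨z', ⟨r, rfl⟩, rfl⟩
        exact ⟨rᵀ, by rw [Matrix.transpose_mul, Matrix.transpose_transpose]⟩
    rw [him, Finset.sum_image (fun a _ b _ hab => hTinj hab),
      Finset.card_image_of_injective _ hTinj]
    calc ∑ z ∈ Finset.image (fun r : Matrix (Fin 2) (Fin 2) (ZMod p) => r * xᵀ) Finset.univ,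
          w zᵀ
        = ∑ z ∈ Finset.image (fun r : Matrix (Fin 2) (Fin 2) (ZMod p) => r * xᵀ) Finset.univ,
          w z := Finset.sum_congr rfl (fun z _ => hwT z)
      _ = Γ * (Finset.image (fun r : Matrix (Fin 2) (Fin 2) (ZMod p) => r * xᵀ)
            Finset.univ).card := hwg_sum_left Γ w hw xᵀ hxT
end

section
/- Let p be a prime with p ≡ 2 or 3 (mod 5) and let T = [[0,1],[1,p−1]] ∈ M_2(F_p). Then the p-th power of T is T^p = [[p−1, p−1],[p−1, 0]]. -/
open Polynomial

set_option maxHeartbeats 1000000 in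
/-- If `p ≡ 2` or `3 (mod 5)` and `T = [[0,1],[1,p−1]]` is the companion matrix of
`x² + x + (p−1)` over `𝔽_p`, then `T^p = [[p−1, p−1],[p−1, 0]]`. -/
theorem companion_pow_p (p : ℕ) [Fact p.Prime] (hp : p % 5 = 2 ∨ p % 5 = 3) :
    (!![0, 1; 1, (p : ZMod p) - 1] : Matrix (Fin 2) (Fin 2) (ZMod p)) ^ p =
      !![(p : ZMod p) - 1, (p : ZMod p) - 1; (p : ZMod p) - 1, 0] := by
  have hpp := (Fact.out : p.Prime)
  rcases eq_or_ne p 2 with rfl | hp2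
  · have h0 : ((2 : ℕ) : ZMod 2) = 0 := ZMod.natCast_self 2
    have h2 : (1 : ZMod 2) + 1 = 0 := by
      have h := ZMod.natCast_self 2
      have h' : ((2 : ℕ) : ZMod 2) = 1 + 1 := by push_cast; ring
      rw [h'] at h; exact h
    have h1 : ((2 : ℕ) : ZMod 2) - 1 = 1 := by rw [h0]; linear_combination -h2
    rw [h1, pow_two, Matrix.mul_fin_two]
    ext i j
    fin_cases i <;> fin_cases j <;> simp <;> linear_combination h2
  have hp5 : p ≠ 5 := by rintro rfl; simp at hp
  -- Step 1: x^2 + x - 1 has no root in ZMod p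
  have hroot : ∀ c : ZMod p, c ^ 2 + c - 1 ≠ 0 := by
    intro c hc
    have h5 : IsSquare ((5 : ℕ) : ZMod p) := by
      refine ⟨2 * c + 1, ?_⟩
      push_cast
      linear_combination (-4 : ZMod p) * hc
    haveI : Fact (Nat.Prime 5) := ⟨by norm_num⟩
    have h5' := (ZMod.exists_sq_eq_prime_iff_of_mod_four_eq_one (p := 5) (q := p)
      (by norm_num) hp2).mpr h5
    rw [← ZMod.natCast_mod p 5] at h5'
    rcases hp with h | h <;> rw [h] at h5' <;> exact absurd h5' (by decide +revert)
  -- Step 2: the polynomial q = X^2 + X - 1 is irreducible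
  set q : (ZMod p)[X] := X ^ 2 + X - 1 with hq
  have hmonic : q.Monic := by unfold q; monicity!
  have hdeg : q.natDegree = 2 := by unfold q; compute_degree!
  have hirr : Irreducible q := by
    rw [hmonic.irreducible_iff_roots_eq_zero_of_degree_le_three (by omega) (by omega)]
    by_contra h
    obtain ⟨c, hc⟩ := Multiset.exists_mem_of_ne_zero h
    have hc' : eval c q = 0 := (mem_roots hmonic.ne_zero).mp hc
    apply hroot c
    have : eval c q = c ^ 2 + c - 1 := by simp [hq]
    rwa [← this]
  haveI : Fact (Irreducible q) := ⟨hirr⟩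
  set θ := AdjoinRoot.root q with hθdef
  haveI : CharP (AdjoinRoot q) p :=
    charP_of_injective_algebraMap (algebraMap (ZMod p) (AdjoinRoot q)).injective p
  have hθ : θ ^ 2 + θ - 1 = 0 := by
    have h := AdjoinRoot.eval₂_root q
    rw [hq] at h
    simpa using h
  -- Frobenius
  have hfrob : (θ ^ p) ^ 2 + θ ^ p - 1 = 0 := by
    have h1 : (θ ^ 2 + θ - 1) ^ p = 0 := by rw [hθ]; exact zero_pow hpp.ne_zero
    rw [sub_pow_char, add_pow_char, one_pow, ← pow_mul, mul_comm 2 p, pow_mul] at h1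
    exact h1
  have hsplit : (θ ^ p - θ) * (θ ^ p + 1 + θ) = 0 := by linear_combination hfrob - hθ
  -- θ is not in the image of ZMod p
  have hθnotin : ∀ c : ZMod p, θ ≠ algebraMap (ZMod p) (AdjoinRoot q) c := by
    intro c hceq
    apply hroot c
    apply (algebraMap (ZMod p) (AdjoinRoot q)).injective
    rw [map_sub, map_add, map_pow, map_one, map_zero, ← hceq]
    exact hθ
  -- rule out θ^p = θ
  have hθp : θ ^ p = -1 - θ := by
    rcases mul_eq_zero.mp hsplit with h | h
    · exfalso
      have hfix : θ ^ p = θ := by linear_combination h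
      set f : (AdjoinRoot q)[X] := X ^ p - X with hf
      have hfdeg : f.natDegree = p := by
        rw [hf, natDegree_sub_eq_left_of_natDegree_lt, natDegree_X_pow]
        rw [natDegree_X, natDegree_X_pow]
        exact hpp.one_lt
      have hfne : f ≠ 0 := fun h0 => by
        rw [h0, natDegree_zero] at hfdeg; exact hpp.ne_zero hfdeg.symm
      set Z : Finset (AdjoinRoot q) := insert θ (Finset.image (algebraMap (ZMod p) (AdjoinRoot q)) Finset.univ) with hZ
      have hZsub : Z.val ⊆ f.roots := by
        intro x hx
        rw [mem_roots hfne]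
        have hx' : x ∈ Z := hx
        rw [hZ, Finset.mem_insert] at hx'
        rcases hx' with rfl | hx'
        · simp only [IsRoot, hf, eval_sub, eval_pow, eval_X]
          rw [hfix, sub_self]
        · obtain ⟨c, _, rfl⟩ := Finset.mem_image.mp hx'
          simp only [IsRoot, hf, eval_sub, eval_pow, eval_X]
          rw [← map_pow, ZMod.pow_card, sub_self]
      have hcard : Z.card = p + 1 := by
        rw [hZ, Finset.card_insert_of_notMem, Finset.card_image_of_injective _
          (algebraMap (ZMod p) (AdjoinRoot q)).injective, Finset.card_univ, ZMod.card]
        intro hmem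
        obtain ⟨c, _, hceq⟩ := Finset.mem_image.mp hmem
        exact hθnotin c hceq.symm
      have := Polynomial.card_le_degree_of_subset_roots hZsub
      rw [hcard, hfdeg] at this
      omega
    · linear_combination h
  -- transfer to matrices
  have hpz : (p : ZMod p) = 0 := ZMod.natCast_self p
  have hT : aeval (!![0, 1; 1, (p : ZMod p) - 1] : Matrix (Fin 2) (Fin 2) (ZMod p)) q = 0 := by
    rw [hq]
    simp only [map_sub, map_add, map_pow, aeval_X, map_one]
    rw [pow_two, Matrix.mul_fin_two, Matrix.one_fin_two, hpz]
    ext i j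
    fin_cases i <;> fin_cases j <;> simp <;> ring_nf
  have hdvd : q ∣ X ^ p + 1 + X := by
    rw [← AdjoinRoot.mk_eq_zero]
    have hmk : AdjoinRoot.mk q (X ^ p + 1 + X) = θ ^ p + 1 + θ := by
      rw [map_add, map_add, map_pow, map_one, AdjoinRoot.mk_X]
    rw [hmk, hθp]
    ring
  obtain ⟨g, hg⟩ := hdvd
  have hTp : (!![0, 1; 1, (p : ZMod p) - 1] : Matrix (Fin 2) (Fin 2) (ZMod p)) ^ p + 1 +
      !![0, 1; 1, (p : ZMod p) - 1] = 0 := by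
    have h := congrArg (aeval (!![0, 1; 1, (p : ZMod p) - 1] : Matrix (Fin 2) (Fin 2) (ZMod p))) hg
    simp only [map_add, map_pow, map_one, aeval_X, map_mul, hT, zero_mul] at h
    exact h
  have hTp' : (!![0, 1; 1, (p : ZMod p) - 1] : Matrix (Fin 2) (Fin 2) (ZMod p)) ^ p =
      -(1 + !![0, 1; 1, (p : ZMod p) - 1]) :=
    eq_neg_of_add_eq_zero_left (by rw [← add_assoc]; exact hTp)
  rw [hTp', Matrix.one_fin_two, hpz]
  ext i j
  fin_cases i <;> fin_cases j <;> simp <;> ring_nf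
end

section
/- Let p be a prime with p ≡ 2 or 3 (mod 5), let T = [[0,1],[1,p−1]] ∈ M_2(F_p) and v_p = [[1,0],[p−1,p−1]] ∈ M_2(F_p). Then v_p·T = T^p·v_p. -/
open Polynomial

private lemma zmod2_noroot : ∀ c : ZMod 2, c ^ 2 + c - 1 ≠ 0 := by decide

private lemma zmod5_not_sq_two : ¬IsSquare ((2 : ℕ) : ZMod 5) := by decide

private lemma zmod5_not_sq_three : ¬IsSquare ((3 : ℕ) : ZMod 5) := by decide

section Aux

variable (p : ℕ) [Fact p.Prime]

private lemma aux_noroot (hp : p % 5 = 2 ∨ p % 5 = 3) (c : ZMod p) :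
    c ^ 2 + c - 1 ≠ 0 := by
  intro hc
  rcases eq_or_ne p 2 with rfl | hp2
  · exact zmod2_noroot c hc
  · have h5 : IsSquare (5 : ZMod p) := ⟨2 * c + 1, by linear_combination -4 * hc⟩
    haveI : Fact (Nat.Prime 5) := ⟨by norm_num⟩
    have h6 : IsSquare ((p : ℕ) : ZMod 5) :=
      (ZMod.exists_sq_eq_prime_iff_of_mod_four_eq_one (p := 5) (q := p)
        (by norm_num) hp2).mpr (by exact_mod_cast h5)
    rw [← ZMod.natCast_mod] at h6
    rcases hp with h | h <;> rw [h] at h6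
    · exact absurd h6 zmod5_not_sq_two
    · exact absurd h6 zmod5_not_sq_three

private lemma aux_irred (hp : p % 5 = 2 ∨ p % 5 = 3) :
    Irreducible (X ^ 2 + X - 1 : (ZMod p)[X]) := by
  have hdeg : (X ^ 2 + X - 1 : (ZMod p)[X]).natDegree = 2 := by
    compute_degree!
  rw [Polynomial.irreducible_iff_roots_eq_zero_of_degree_le_three (by omega) (by omega)]
  have h0 : (X ^ 2 + X - 1 : (ZMod p)[X]) ≠ 0 := fun h => by
    rw [h] at hdeg; simp at hdeg
  rw [Multiset.eq_zero_iff_forall_notMem]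
  intro c hc
  rw [mem_roots h0] at hc
  exact aux_noroot p hp c (by simpa using hc)

set_option maxHeartbeats 1000000 in
private lemma aux_Tpow (hp : p % 5 = 2 ∨ p % 5 = 3) :
    (!![0, 1; 1, -1] : Matrix (Fin 2) (Fin 2) (ZMod p)) ^ p
      = -1 - !![0, 1; 1, -1] := by
  set f : (ZMod p)[X] := X ^ 2 + X - 1 with hf
  haveI : Fact (Irreducible f) := ⟨aux_irred p hp⟩
  set A := AdjoinRoot f with hA
  set r : A := AdjoinRoot.root f with hr
  have hroot : r ^ 2 + r - 1 = 0 := by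
    have := AdjoinRoot.eval₂_root f
    simpa [hf] using this
  haveI : CharP A p :=
    charP_of_injective_algebraMap (algebraMap (ZMod p) A).injective p
  have hp1 : 1 < p := (Fact.out : p.Prime).one_lt
  -- r^p is also a root of f
  have hfrob : (r ^ p) ^ 2 + r ^ p - 1 = 0 := by
    have : (r ^ 2 + r - 1) ^ p = (r ^ p) ^ 2 + r ^ p - 1 := by
      rw [sub_pow_char, add_pow_char, one_pow, ← pow_mul, mul_comm 2 p, pow_mul]
    rw [hroot] at this
    rw [← this, zero_pow (by omega)]
  -- r^p ≠ r
  have hne : r ^ p ≠ r := by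
    intro heq
    set g : A[X] := X ^ p - X with hg
    have hg0 : g ≠ 0 := FiniteField.X_pow_card_sub_X_ne_zero A hp1
    have hgdeg : g.natDegree = p := FiniteField.X_pow_card_sub_X_natDegree_eq A hp1
    have hrg : r ∈ g.roots.toFinset := by
      rw [Multiset.mem_toFinset, mem_roots hg0]
      simp [hg, IsRoot, heq]
    have hsub : (Finset.univ.image (algebraMap (ZMod p) A)) ⊆ g.roots.toFinset := by
      intro x hx
      rw [Finset.mem_image] at hx
      obtain ⟨c, _, rfl⟩ := hx
      rw [Multiset.mem_toFinset, mem_roots hg0]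
      simp [hg, IsRoot, ← map_pow, ZMod.pow_card]
    have hcard : g.roots.toFinset.card ≤ (Finset.univ.image (algebraMap (ZMod p) A)).card := by
      rw [Finset.card_image_of_injective _ (algebraMap (ZMod p) A).injective]
      simp only [Finset.card_univ, ZMod.card]
      calc g.roots.toFinset.card ≤ Multiset.card g.roots := Multiset.toFinset_card_le _
        _ ≤ g.natDegree := g.card_roots'
        _ = p := hgdeg
    have := Finset.eq_of_subset_of_card_le hsub hcard
    rw [← this] at hrg
    rw [Finset.mem_image] at hrg
    obtain ⟨c, _, hc⟩ := hrg
    apply aux_noroot p hp c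
    apply (algebraMap (ZMod p) A).injective
    rw [map_sub, map_add, map_pow, map_one, map_zero, hc]
    exact hroot
  -- hence r^p = -1 - r
  have hrp : r ^ p = -1 - r := by
    have hfac : (r ^ p - r) * (r ^ p + r + 1) = 0 := by
      linear_combination hfrob - hroot
    rcases mul_eq_zero.mp hfac with h | h
    · exact absurd (sub_eq_zero.mp h) hne
    · linear_combination h
  -- transfer to matrices
  set T : Matrix (Fin 2) (Fin 2) (ZMod p) := !![0, 1; 1, -1] with hT
  have hTf : aeval T f = 0 := by
    have hT2 : T ^ 2 = 1 - T := by
      rw [pow_two, hT]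
      ext i j
      fin_cases i <;> fin_cases j <;>
        simp [Matrix.mul_apply, Fin.sum_univ_two, Matrix.one_apply]
    simp [hf, hT2]
  have hdvd : f ∣ (X ^ p + X + 1) := by
    rw [← AdjoinRoot.mk_eq_zero]
    have : AdjoinRoot.mk f (X ^ p + X + 1) = r ^ p + r + 1 := by
      rw [map_add, map_add, map_pow, map_one, AdjoinRoot.mk_X]
    rw [this, hrp]
    abel
  obtain ⟨q, hq⟩ := hdvd
  have h1 : T ^ p + T + 1 = 0 := by
    have := congrArg (aeval T) hq
    rw [map_add, map_add, map_pow, map_one, aeval_X, map_mul, hTf, zero_mul] at this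
    exact this
  rw [add_assoc, add_eq_zero_iff_eq_neg] at h1
  rw [h1]
  abel

end Aux

/-- If `p ≡ 2` or `3 (mod 5)`, `T = [[0,1],[1,p−1]]` and `v_p = [[1,0],[p−1,p−1]]` in
`M₂(𝔽_p)`, then `v_p · T = T^p · v_p`. -/
theorem vp_mul_companion (p : ℕ) [Fact p.Prime] (hp : p % 5 = 2 ∨ p % 5 = 3) :
    (!![1, 0; (p : ZMod p) - 1, (p : ZMod p) - 1] : Matrix (Fin 2) (Fin 2) (ZMod p)) *
        !![0, 1; 1, (p : ZMod p) - 1] =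
      (!![0, 1; 1, (p : ZMod p) - 1] : Matrix (Fin 2) (Fin 2) (ZMod p)) ^ p *
        !![1, 0; (p : ZMod p) - 1, (p : ZMod p) - 1] := by
  have h0 : (p : ZMod p) - 1 = -1 := by rw [ZMod.natCast_self, zero_sub]
  rw [h0, aux_Tpow p hp]
  ext i j
  fin_cases i <;> fin_cases j <;>
    simp [Matrix.mul_apply, Fin.sum_univ_two, Matrix.sub_apply, Matrix.one_apply]
end

section
/- Let p be a prime with p ≡ 2 or 3 (mod 5) and let T = [[0,1],[1,p−1]] ∈ M_2(F_p). Then the set F_p[T] = {aI + bT : a, b ∈ F_p} is a commutative subring of M_2(F_p) that is a field with exactly p^2 elements. -/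
lemma no_root_two : ∀ x : ZMod 2, x ^ 2 ≠ x + 1 := by decide
lemma not_sq_two : ¬ IsSquare (2 : ZMod 5) := by decide
lemma not_sq_three : ¬ IsSquare (3 : ZMod 5) := by decide

lemma no_root_aux (p : ℕ) [Fact p.Prime] (hp : p % 5 = 2 ∨ p % 5 = 3)
    (x : ZMod p) : x ^ 2 ≠ x + 1 := by
  intro hx
  by_cases hp2 : p = 2
  · subst hp2; exact no_root_two x hx
  · have h5 : IsSquare ((5 : ℕ) : ZMod p) := by
      refine ⟨2 * x - 1, ?_⟩
      push_cast
      linear_combination (-4 : ZMod p) * hx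
    haveI : Fact (Nat.Prime 5) := ⟨by norm_num⟩
    have := (ZMod.exists_sq_eq_prime_iff_of_mod_four_eq_one (p := 5) (q := p)
      (by norm_num) hp2).mpr h5
    have hcast : ((p : ℕ) : ZMod 5) = ((p % 5 : ℕ) : ZMod 5) := (ZMod.natCast_mod p 5).symm
    rcases hp with h | h <;> rw [hcast, h] at this <;> norm_cast at this
    · exact not_sq_two this
    · exact not_sq_three this

set_option maxHeartbeats 1000000 in
set_option synthInstance.maxHeartbeats 200000 in
/-- If `p ≡ 2` or `3 (mod 5)` and `T = [[0,1],[1,p−1]] ∈ M₂(𝔽_p)`, then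
`𝔽_p[T] = {aI + bT : a, b ∈ 𝔽_p}` is a commutative subring of `M₂(𝔽_p)` which is a field
with exactly `p²` elements. -/
theorem Fp_adjoin_T_is_field (p : ℕ) [Fact p.Prime] (hp : p % 5 = 2 ∨ p % 5 = 3)
    (T : Matrix (Fin 2) (Fin 2) (ZMod p)) (hT : T = !![0, 1; 1, (p : ZMod p) - 1]) :
    ∃ S : Subring (Matrix (Fin 2) (Fin 2) (ZMod p)),
      (S : Set (Matrix (Fin 2) (Fin 2) (ZMod p))) =
        {A | ∃ a b : ZMod p, A = a • (1 : Matrix (Fin 2) (Fin 2) (ZMod p)) + b • T} ∧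
      (∀ x ∈ S, ∀ y ∈ S, x * y = y * x) ∧
      IsField S ∧
      Nat.card S = p ^ 2 := by
  have hp0 : (p : ZMod p) = 0 := ZMod.natCast_self p
  have hform : ∀ a b : ZMod p,
      a • (1 : Matrix (Fin 2) (Fin 2) (ZMod p)) + b • T = !![a, b; b, a - b] := by
    intro a b
    subst hT
    ext i j
    fin_cases i <;> fin_cases j <;>
      simp [Matrix.one_apply, hp0, smul_eq_mul, sub_eq_add_neg]
  have hTsq : T * T = 1 - T := by
    subst hT
    ext i j
    fin_cases i <;> fin_cases j <;>
      simp [Matrix.mul_apply, Fin.sum_univ_two, Matrix.one_apply, hp0]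
  have huniq : ∀ a b c d : ZMod p,
      a • (1 : Matrix (Fin 2) (Fin 2) (ZMod p)) + b • T =
        c • (1 : Matrix (Fin 2) (Fin 2) (ZMod p)) + d • T → a = c ∧ b = d := by
    intro a b c d h
    rw [hform, hform] at h
    constructor
    · have := congrFun (congrFun h 0) 0; simpa using this
    · have := congrFun (congrFun h 0) 1; simpa using this
  have hmul : ∀ a b c d : ZMod p,
      (a • (1 : Matrix (Fin 2) (Fin 2) (ZMod p)) + b • T) *
        (c • (1 : Matrix (Fin 2) (Fin 2) (ZMod p)) + d • T) =
      (a * c + b * d) • (1 : Matrix (Fin 2) (Fin 2) (ZMod p)) +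
        (a * d + b * c - b * d) • T := by
    intro a b c d
    rw [add_mul, mul_add, mul_add, smul_mul_smul_comm, smul_mul_smul_comm,
      smul_mul_smul_comm, smul_mul_smul_comm]
    simp only [one_mul, mul_one, hTsq, smul_sub]
    module
  have hN : ∀ a b : ZMod p, ¬(a = 0 ∧ b = 0) → a * a - a * b - b * b ≠ 0 := by
    intro a b hab h
    by_cases hb : b = 0
    · subst hb
      simp at h
      exact hab ⟨h, rfl⟩
    · apply no_root_aux p hp (a * b⁻¹)
      field_simp
      linear_combination h
  let S : Subring (Matrix (Fin 2) (Fin 2) (ZMod p)) :=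
    { carrier := {A | ∃ a b : ZMod p, A = a • (1 : Matrix (Fin 2) (Fin 2) (ZMod p)) + b • T}
      mul_mem' := by
        rintro x y ⟨a, b, rfl⟩ ⟨c, d, rfl⟩
        exact ⟨a * c + b * d, a * d + b * c - b * d, hmul a b c d⟩
      one_mem' := ⟨1, 0, by simp⟩
      add_mem' := by
        rintro x y ⟨a, b, rfl⟩ ⟨c, d, rfl⟩
        exact ⟨a + c, b + d, by module⟩
      zero_mem' := ⟨0, 0, by simp⟩
      neg_mem' := by
        rintro x ⟨a, b, rfl⟩
        exact ⟨-a, -b, by module⟩ }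
  have hmemS : ∀ x : Matrix (Fin 2) (Fin 2) (ZMod p), x ∈ S ↔
      ∃ a b : ZMod p, x = a • (1 : Matrix (Fin 2) (Fin 2) (ZMod p)) + b • T :=
    fun x => Iff.rfl
  refine ⟨S, rfl, ?_, ?_, ?_⟩
  · intro x hx y hy
    obtain ⟨a, b, rfl⟩ := (hmemS x).mp hx
    obtain ⟨c, d, rfl⟩ := (hmemS y).mp hy
    rw [hmul, hmul]
    ring_nf
  · refine ⟨⟨0, 1, ?_⟩, ?_, ?_⟩
    · intro h
      have : (0 : Matrix (Fin 2) (Fin 2) (ZMod p)) = 1 := congrArg Subtype.val h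
      exact zero_ne_one this
    · rintro ⟨x, hx⟩ ⟨y, hy⟩
      obtain ⟨a, b, rfl⟩ := (hmemS x).mp hx
      obtain ⟨c, d, rfl⟩ := (hmemS y).mp hy
      apply Subtype.ext
      show (a • 1 + b • T) * (c • 1 + d • T) = (c • 1 + d • T) * (a • 1 + b • T)
      rw [hmul, hmul]
      ring_nf
    · rintro ⟨x, hx⟩ hx0
      obtain ⟨a, b, rfl⟩ := (hmemS x).mp hx
      have hab : ¬(a = 0 ∧ b = 0) := by
        rintro ⟨rfl, rfl⟩
        exact hx0 (Subtype.ext (by simp))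
      have hNne := hN a b hab
      have hNi : (a * a - a * b - b * b) * (a * a - a * b - b * b)⁻¹ = 1 :=
        mul_inv_cancel₀ hNne
      set Ni : ZMod p := (a * a - a * b - b * b)⁻¹ with hNidef
      refine ⟨⟨((a - b) * Ni) • 1 + (-b * Ni) • T,
        (hmemS _).mpr ⟨(a - b) * Ni, -b * Ni, rfl⟩⟩, ?_⟩
      apply Subtype.ext
      show (a • 1 + b • T) * (((a - b) * Ni) • 1 + (-b * Ni) • T) = 1
      rw [hmul]
      have h1 : a * ((a - b) * Ni) + b * (-b * Ni) = 1 := by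
        linear_combination hNi
      have h2 : a * (-b * Ni) + b * ((a - b) * Ni) - b * (-b * Ni) = 0 := by ring
      rw [h1, h2]
      simp
  · have hbij : Function.Bijective
        (fun ab : ZMod p × ZMod p =>
          (⟨ab.1 • 1 + ab.2 • T, (hmemS _).mpr ⟨ab.1, ab.2, rfl⟩⟩ : S)) := by
      constructor
      · rintro ⟨a, b⟩ ⟨c, d⟩ h
        have := huniq a b c d (congrArg Subtype.val h)
        exact Prod.ext this.1 this.2
      · rintro ⟨x, hx⟩
        obtain ⟨a, b, rfl⟩ := (hmemS x).mp hx
        exact ⟨(a, b), rfl⟩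
    have hcard := Nat.card_eq_of_bijective _ hbij
    rw [Nat.card_prod, Nat.card_zmod] at hcard
    rw [← hcard, sq]
end
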